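/- arXiv:2501.08656 — 2 statements merged into one kernel-verified Lean document; each statement's English description precedes it below -/
import Mathlib

section
/- Let (M,d) be a finite metric space with N+1 points and let (b_n)_{n=1}^N be a basis of F(M) all of whose elements are molecules. Then there exist F ∈ Σ(M) and a tree T ∈ T(F) such that max_{x ≠ y ∈ M} d_T(x,y)/d(x,y) = d_1(b_n). In particular, M is isomorphic to a geodesic tree with Lipschitz distortion D if and only if F(M) has a basis made of molecules with ℓ1^N-distortion D. -/
open Finset

noncomputable section
open scoped Classical

namespace TCS

/-- The indicator function of a point. -/
def indic {V : Type*} [DecidableEq V] (x : V) : V → ℝ := fun z => if z = x then 1 else 0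

/-- The molecule `δ_x - δ_y`. -/
def mol {V : Type*} [DecidableEq V] (x y : V) : V → ℝ := fun z => indic x z - indic y z

/-- `d` is a metric on `V`. -/
def IsMetric {V : Type*} (d : V → V → ℝ) : Prop :=
  (∀ x y, d x y = d y x) ∧ (∀ x y, d x y = 0 ↔ x = y) ∧ ∀ x y z, d x z ≤ d x y + d y z

/-- The transportation cost norm of `μ` (an element of the free space over `(V, d)`,
i.e. a function with total sum zero), defined by duality with `Lip_0`. -/
def tcNorm {V : Type*} [Fintype V] (d : V → V → ℝ) (x0 : V) (μ : V → ℝ) : ℝ :=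
  sSup {c : ℝ | ∃ f : V → ℝ, f x0 = 0 ∧ (∀ x y, |f x - f y| ≤ d x y) ∧ c = ∑ x, μ x * f x}

/-- `(b, bstar)` is a basis of the free space over `Fin (N+1)` (with basepoint `0`),
indexed by `n ≠ 0`, together with its coordinate functionals. -/
def IsFreeBasis (N : ℕ) (b : Fin (N+1) → Fin (N+1) → ℝ)
    (bstar : Fin (N+1) → (Fin (N+1) → ℝ) → ℝ) : Prop :=
  (∀ n : Fin (N+1), n ≠ 0 → ∑ x, b n x = 0) ∧
  (∀ μ : Fin (N+1) → ℝ, (∑ x, μ x = 0) → ∀ z,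
      μ z = ∑ n ∈ univ.filter (· ≠ (0 : Fin (N+1))), bstar n μ * b n z) ∧
  (∀ n m : Fin (N+1), n ≠ 0 → m ≠ 0 → bstar n (b m) = if n = m then 1 else 0) ∧
  (∀ n (c : ℝ) (μ ν : Fin (N+1) → ℝ), bstar n (c • μ + ν) = c * bstar n μ + bstar n ν)

/-- Every canonical projection of the (ordered) basis `(b, bstar)` is a stochastic
retraction. -/
def IsStochProj (N : ℕ) (b : Fin (N+1) → Fin (N+1) → ℝ)
    (bstar : Fin (N+1) → (Fin (N+1) → ℝ) → ℝ) : Prop :=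
  ∀ n : Fin (N+1),
    ∃ S : Finset (Fin (N+1)), (0 : Fin (N+1)) ∈ S ∧
      ∃ R : Fin (N+1) → Fin (N+1) → ℝ,
        (∀ x, (∀ z, 0 ≤ R x z) ∧ (∀ z, z ∉ S → R x z = 0) ∧ ∑ z, R x z = 1) ∧
        (∀ x ∈ S, R x = indic x) ∧
        (∀ μ : Fin (N+1) → ℝ, (∑ x, μ x = 0) → ∀ z,
          (∑ i ∈ univ.filter (fun i => i ≠ (0 : Fin (N+1)) ∧ i ≤ n), bstar i μ * b i z)
            = ∑ x, μ x * R x z)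

/-- The `ℓ₁`-distortion of the basis `(b, bstar)`. -/
def d1Basis {N : ℕ} (d : Fin (N+1) → Fin (N+1) → ℝ) (b : Fin (N+1) → Fin (N+1) → ℝ)
    (bstar : Fin (N+1) → (Fin (N+1) → ℝ) → ℝ) : ℝ :=
  sSup {c : ℝ | ∃ μ : Fin (N+1) → ℝ, (∑ x, μ x = 0) ∧ tcNorm d 0 μ = 1 ∧
    c = ∑ n ∈ univ.filter (· ≠ (0 : Fin (N+1))), |bstar n μ| * tcNorm d 0 (b n)}

/-- The `ℓ₁ᴺ`-distortion of the metric space `(Fin (N+1), d)`. -/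
def d1Space {N : ℕ} (d : Fin (N+1) → Fin (N+1) → ℝ) : ℝ :=
  sInf {c : ℝ | ∃ b bstar, IsFreeBasis N b bstar ∧ c = d1Basis d b bstar}

/-- The stochastic `ℓ₁ᴺ`-distortion of the metric space `(Fin (N+1), d)`. -/
def sd1Space {N : ℕ} (d : Fin (N+1) → Fin (N+1) → ℝ) : ℝ :=
  sInf {c : ℝ | ∃ b bstar, IsFreeBasis N b bstar ∧ IsStochProj N b bstar ∧
      c = d1Basis d b bstar}

/-- The data `(λ_{n,i})` of a normalised stochastic basis. -/
def LamData (N : ℕ) (lam : Fin (N+1) → Fin (N+1) → ℝ) : Prop :=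
  (∀ n i, 0 ≤ lam n i ∧ lam n i ≤ 1) ∧
  (∀ n i : Fin (N+1), ¬ i < n → lam n i = 0) ∧
  (∀ n : Fin (N+1), n ≠ 0 → ∑ i, lam n i = 1)

/-- The normalised stochastic basis with data `F`, `(λ_{n,i})`:
`b n = δ_{F n} - ∑_{i<n} λ_{n,i} δ_{F i}`. -/
def normBasisF {N : ℕ} (F : Equiv.Perm (Fin (N+1))) (lam : Fin (N+1) → Fin (N+1) → ℝ)
    (n : Fin (N+1)) : Fin (N+1) → ℝ :=
  fun z => indic (F n) z - ∑ i, lam n i * indic (F i) z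

/-- The normalised stochastic basis after identifying `M` with `{0, …, N}` via `F`. -/
def normBasis {N : ℕ} (lam : Fin (N+1) → Fin (N+1) → ℝ) : Fin (N+1) → Fin (N+1) → ℝ :=
  normBasisF (Equiv.refl _) lam

/-- `bstar` is the family of coordinate functionals of the normalised
stochastic basis with data `F`, `(λ_{n,i})`. -/
def IsCoordF {N : ℕ} (F : Equiv.Perm (Fin (N+1))) (lam : Fin (N+1) → Fin (N+1) → ℝ)
    (bstar : Fin (N+1) → (Fin (N+1) → ℝ) → ℝ) : Prop :=
  ∀ μ : Fin (N+1) → ℝ, (∑ x, μ x = 0) → ∀ z,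
    μ z = ∑ n ∈ univ.filter (· ≠ (0 : Fin (N+1))), bstar n μ * normBasisF F lam n z

/-- The auxiliary function `α(μ)` defined by downwards recursion:
`α(μ)(n) = μ n + ∑_{m > n} α(μ)(m) λ_{m,n}`. -/
def alpha {N : ℕ} (lam : Fin (N+1) → Fin (N+1) → ℝ) (μ : Fin (N+1) → ℝ)
    (n : Fin (N+1)) : ℝ :=
  μ n + ∑ m ∈ (Finset.univ.filter (fun m : Fin (N+1) => n < m)).attach,
      alpha lam μ m.1 * lam m.1 n
termination_by (N + 1) - n.val
decreasing_by
  have hm := m.2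
  simp only [Finset.mem_filter, Finset.mem_univ, true_and] at hm
  have h1 : n.val < m.1.val := hm
  have h2 := m.1.isLt
  omega

/-- Trees on `{0,…,N}` compatible with the order: given by a parent map with
`par n < n` for `n ≠ 0`. -/
def Tr (N : ℕ) : Type :=
  {par : Fin (N+1) → Fin (N+1) // par 0 = 0 ∧ ∀ n, n ≠ 0 → par n < n}

instance (N : ℕ) : Finite (Tr N) :=
  inferInstanceAs (Finite {par : Fin (N+1) → Fin (N+1) // par 0 = 0 ∧ ∀ n, n ≠ 0 → par n < n})

noncomputable instance (N : ℕ) : Fintype (Tr N) := Fintype.ofFinite _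

/-- `a` lies on the tree path from `x` to the root `0`. -/
def Anc {N : ℕ} (T : Tr N) (x a : Fin (N+1)) : Prop :=
  Relation.ReflTransGen (fun u v => v = T.1 u ∧ u ≠ 0) x a

/-- The meeting point `m_T(x,y)`: the minimal vertex of the tree path `[x,y]_T`,
equivalently the nearest common ancestor. -/
noncomputable def meet {N : ℕ} (T : Tr N) (x y : Fin (N+1)) : Fin (N+1) :=
  WithBot.unbotD 0 ((Finset.univ.filter (fun a => Anc T x a ∧ Anc T y a)).max)

/-- `p` is a probability distribution on `Tr N`. -/
def IsProb {N : ℕ} (p : Tr N → ℝ) : Prop := (∀ T, 0 ≤ p T) ∧ ∑ T, p T = 1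

/-- Probability of an event. -/
def probOf {N : ℕ} (p : Tr N → ℝ) (P : Tr N → Prop) : ℝ :=
  ∑ T ∈ Finset.univ.filter P, p T

/-- Expectation. -/
def expval {N : ℕ} (p : Tr N → ℝ) (f : Tr N → ℝ) : ℝ := ∑ T, p T * f T

/-- The geodesic distance `d_T(x,y)` of the weighted tree `T` (edge `{n, par n}`
carrying weight `d n (par n)`). -/
noncomputable def treeDist {N : ℕ} (d : Fin (N+1) → Fin (N+1) → ℝ) (T : Tr N)
    (x y : Fin (N+1)) : ℝ :=
  ∑ s ∈ Finset.univ.filter (fun s =>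
      (Anc T x s ∨ Anc T y s) ∧ Anc T s (meet T x y) ∧ s ≠ meet T x y),
    d s (T.1 s)

/-- `s` lies on the half-open segment `[z, m)_T`. -/
def onHalfSeg {N : ℕ} (T : Tr N) (z m s : Fin (N+1)) : Prop :=
  Anc T z s ∧ Anc T s m ∧ s ≠ m

/-- `p` is `(x,y)`-independent. -/
def XYIndep {N : ℕ} (p : Tr N → ℝ) (x y : Fin (N+1)) : Prop :=
  ∀ z : Fin (N+1), (z = x ∨ z = y) → ∀ s t : Fin (N+1), t < s →
    probOf p (fun T => T.1 s = t ∧ onHalfSeg T z (meet T x y) s)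
      = probOf p (fun T => T.1 s = t) * probOf p (fun T => onHalfSeg T z (meet T x y) s)

/-- `p0` and `p` are compatible: every vertex pair has the same probability of
being an edge of the random tree. -/
def Compat {N : ℕ} (p0 p : Tr N → ℝ) : Prop :=
  ∀ s t : Fin (N+1), t < s →
    probOf p0 (fun T => T.1 s = t) = probOf p (fun T => T.1 s = t)

/-- The product probability `π_{(b_n)}` determined by the data `(λ_{n,i})`. -/
def prodProb {N : ℕ} (lam : Fin (N+1) → Fin (N+1) → ℝ) (T : Tr N) : ℝ :=
  ∏ n ∈ Finset.univ.filter (fun n : Fin (N+1) => n ≠ 0), lam n (T.1 n)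

/-- The (strictly decreasing) chain with vertex set `S` is a subgraph of `T`:
consecutive elements of `S` are linked by the parent map. -/
def chainInTree {N : ℕ} (S : Finset (Fin (N+1))) (T : Tr N) : Prop :=
  ∀ a ∈ S, (∃ c ∈ S, c < a) → T.1 a ∈ S ∧ ∀ c ∈ S, c < a → c ≤ T.1 a

end TCS

namespace TCS

lemma IsMetric.nonneg {V : Type*} {d : V → V → ℝ} (hd : IsMetric d) (x y : V) : 0 ≤ d x y := by
  have h0 : d x x = 0 := (hd.2.1 x x).2 rfl
  have h := hd.2.2 x y x
  rw [h0, hd.1 y x] at h; linarith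

lemma IsMetric.pos {V : Type*} {d : V → V → ℝ} (hd : IsMetric d) {x y : V} (h : x ≠ y) :
    0 < d x y :=
  lt_of_le_of_ne (hd.nonneg x y) (fun he => h ((hd.2.1 x y).1 he.symm))

lemma sum_mol_mul {V : Type*} [Fintype V] [DecidableEq V] (x y : V) (g : V → ℝ) :
    ∑ z, mol x y z * g z = g x - g y := by
  simp [mol, indic, sub_mul, ite_mul, Finset.sum_sub_distrib]

lemma sum_mol {V : Type*} [Fintype V] [DecidableEq V] (x y : V) :
    ∑ z, mol x y z = 0 := by
  simp [mol, indic, Finset.sum_sub_distrib]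

lemma tcNorm_bddAbove {V : Type*} [Fintype V] (d : V → V → ℝ) (x0 : V) (μ : V → ℝ) :
    BddAbove {c : ℝ | ∃ f : V → ℝ, f x0 = 0 ∧ (∀ x y, |f x - f y| ≤ d x y) ∧
      c = ∑ x, μ x * f x} := by
  refine ⟨∑ x, |μ x| * d x x0, ?_⟩
  rintro c ⟨f, hf0, hLip, rfl⟩
  calc ∑ x, μ x * f x ≤ ∑ x, |μ x * f x| :=
        Finset.sum_le_sum fun i _ => le_abs_self _
    _ ≤ ∑ x, |μ x| * d x x0 := by
        refine Finset.sum_le_sum fun i _ => ?_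
        rw [abs_mul]
        exact mul_le_mul_of_nonneg_left (by simpa [hf0] using hLip i x0) (abs_nonneg _)

lemma tcNorm_set_nonempty {V : Type*} [Fintype V] {d : V → V → ℝ} (hd : ∀ x y, 0 ≤ d x y)
    (x0 : V) (μ : V → ℝ) :
    Set.Nonempty {c : ℝ | ∃ f : V → ℝ, f x0 = 0 ∧ (∀ x y, |f x - f y| ≤ d x y) ∧
      c = ∑ x, μ x * f x} :=
  ⟨0, ⟨fun _ => 0, rfl, fun x y => by simpa using hd x y, by simp⟩⟩

lemma tcNorm_nonneg {V : Type*} [Fintype V] {d : V → V → ℝ} (hd : ∀ x y, 0 ≤ d x y)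
    (x0 : V) (μ : V → ℝ) : 0 ≤ tcNorm d x0 μ :=
  le_csSup (tcNorm_bddAbove d x0 μ) ⟨fun _ => 0, rfl, fun x y => by simpa using hd x y, by simp⟩

/-- The transportation norm of a scaled molecule. -/
lemma tcNorm_smul_mol {V : Type*} [Fintype V] [DecidableEq V] {d : V → V → ℝ}
    (hd : IsMetric d) (x0 : V) {x y : V} (h : x ≠ y) {t : ℝ} (ht : 0 ≤ t) :
    tcNorm d x0 (fun z => t * mol x y z) = t * d x y := by
  apply IsGreatest.csSup_eq
  constructor
  · refine ⟨fun z => d z y - d x0 y, by simp, fun a b => ?_, ?_⟩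
    · dsimp only
      have h1 := hd.2.2 a b y
      have h2 := hd.2.2 b a y
      rw [hd.1 b a] at h2
      rw [abs_sub_le_iff]; constructor <;> linarith
    · have : ∑ z, (t * mol x y z) * (d z y - d x0 y)
          = t * ∑ z, mol x y z * (d z y - d x0 y) := by
        rw [Finset.mul_sum]; exact Finset.sum_congr rfl fun z _ => by ring
      rw [this, sum_mol_mul]
      have hyy : d y y = 0 := (hd.2.1 y y).2 rfl
      rw [hyy]; ring
  · rintro c ⟨f, hf0, hLip, rfl⟩
    have : ∑ z, (t * mol x y z) * f z = t * (f x - f y) := by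
      rw [show ∑ z, (t * mol x y z) * f z = t * ∑ z, mol x y z * f z by
        rw [Finset.mul_sum]; exact Finset.sum_congr rfl fun z _ => by ring, sum_mol_mul]
    rw [this]
    exact mul_le_mul_of_nonneg_left (le_trans (le_abs_self _) (hLip x y)) ht

lemma tcNorm_mol {V : Type*} [Fintype V] [DecidableEq V] {d : V → V → ℝ}
    (hd : IsMetric d) (x0 : V) {x y : V} (h : x ≠ y) :
    tcNorm d x0 (mol x y) = d x y := by
  have := tcNorm_smul_mol hd x0 h (t := 1) zero_le_one
  simpa using this

/-- Comparison: if `d2 ≤ R * d1` pointwise then `tcNorm d2 ≤ R * tcNorm d1`. -/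
lemma tcNorm_le_mul {V : Type*} [Fintype V] {d1 d2 : V → V → ℝ}
    (hd2 : ∀ x y, 0 ≤ d2 x y) {R : ℝ} (hR : 0 < R)
    (hcomp : ∀ x y, d2 x y ≤ R * d1 x y) (x0 : V) (μ : V → ℝ) :
    tcNorm d2 x0 μ ≤ R * tcNorm d1 x0 μ := by
  apply csSup_le (tcNorm_set_nonempty hd2 x0 μ)
  rintro c ⟨f, hf0, hLip, rfl⟩
  have hmem : (∑ x, μ x * (R⁻¹ * f x)) ∈ {c : ℝ | ∃ f : V → ℝ, f x0 = 0 ∧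
      (∀ x y, |f x - f y| ≤ d1 x y) ∧ c = ∑ x, μ x * f x} := by
    refine ⟨fun z => R⁻¹ * f z, by simp [hf0], fun a b => ?_, rfl⟩
    rw [show R⁻¹ * f a - R⁻¹ * f b = R⁻¹ * (f a - f b) by ring, abs_mul,
      abs_of_nonneg (by positivity : (0:ℝ) ≤ R⁻¹)]
    rw [inv_mul_le_iff₀ hR]
    exact le_trans (hLip a b) (hcomp a b)
  have hle : (∑ x, μ x * (R⁻¹ * f x)) ≤ tcNorm d1 x0 μ :=
    le_csSup (tcNorm_bddAbove d1 x0 μ) hmem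
  have : ∑ x, μ x * f x = R * ∑ x, μ x * (R⁻¹ * f x) := by
    rw [Finset.mul_sum]
    refine Finset.sum_congr rfl fun i _ => ?_
    field_simp
  rw [this]
  exact mul_le_mul_of_nonneg_left hle (le_of_lt hR)

/-- Pullback invariance of the transportation norm. -/
lemma tcNorm_pullback {V W : Type*} [Fintype V] [Fintype W] (d : W → W → ℝ) (F : V ≃ W)
    (x0 : V) (μ : W → ℝ) :
    tcNorm (fun i j => d (F i) (F j)) x0 (fun i => μ (F i)) = tcNorm d (F x0) μ := by
  unfold tcNorm
  congr 1
  ext c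
  constructor
  · rintro ⟨f, hf0, hLip, rfl⟩
    refine ⟨fun w => f (F.symm w), by simp [hf0], fun a b => by simpa using hLip (F.symm a) (F.symm b), ?_⟩
    rw [← Equiv.sum_comp F (fun w => μ w * f (F.symm w))]
    simp
  · rintro ⟨f, hf0, hLip, rfl⟩
    refine ⟨fun v => f (F v), hf0, fun a b => hLip (F a) (F b), ?_⟩
    rw [← Equiv.sum_comp F (fun w => μ w * f w)]

end TCS
namespace TCS

variable {N : ℕ}

lemma Anc.le {T : Tr N} {x a : Fin (N+1)} (h : Anc T x a) : a ≤ x := by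
  induction h with
  | refl => exact le_refl x
  | tail _ hstep ih =>
    obtain ⟨hc, hb0⟩ := hstep
    subst hc
    exact le_trans (le_of_lt (T.2.2 _ hb0)) ih

lemma anc_refl (T : Tr N) (x : Fin (N+1)) : Anc T x x := Relation.ReflTransGen.refl

lemma anc_trans {T : Tr N} {x a b : Fin (N+1)} (h1 : Anc T x a) (h2 : Anc T a b) :
    Anc T x b := Relation.ReflTransGen.trans h1 h2

lemma anc_parent {T : Tr N} {x : Fin (N+1)} (h : x ≠ 0) : Anc T x (T.1 x) :=
  Relation.ReflTransGen.single ⟨rfl, h⟩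

lemma anc_zero (T : Tr N) (x : Fin (N+1)) : Anc T x 0 := by
  induction x using WellFoundedLT.induction with
  | ind x ih =>
    by_cases h : x = 0
    · subst h; exact anc_refl T 0
    · exact Relation.ReflTransGen.head ⟨rfl, h⟩ (ih (T.1 x) (T.2.2 x h))

lemma anc_head {T : Tr N} {x a : Fin (N+1)} (h : Anc T x a) (hne : x ≠ a) :
    x ≠ 0 ∧ Anc T (T.1 x) a := by
  rcases (Relation.ReflTransGen.cases_head h) with h' | ⟨b, ⟨hb, h0⟩, hrest⟩
  · exact absurd h' hne
  · subst hb; exact ⟨h0, hrest⟩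

lemma anc_antisymm {T : Tr N} {x a : Fin (N+1)} (h1 : Anc T x a) (h2 : Anc T a x) :
    x = a := le_antisymm h2.le h1.le

lemma anc_zero_eq {T : Tr N} {a : Fin (N+1)} (h : Anc T 0 a) : a = 0 :=
  le_antisymm h.le (Fin.zero_le a)

lemma anc_chain {T : Tr N} : ∀ x a b : Fin (N+1), Anc T x a → Anc T x b →
    Anc T a b ∨ Anc T b a := by
  intro x
  induction x using WellFoundedLT.induction with
  | ind x ih =>
    intro a b ha hb
    by_cases hxa : x = a
    · subst hxa; exact Or.inl hb
    by_cases hxb : x = b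
    · subst hxb; exact Or.inr ha
    obtain ⟨h0, ha'⟩ := anc_head ha hxa
    obtain ⟨_, hb'⟩ := anc_head hb hxb
    exact ih (T.1 x) (T.2.2 x h0) a b ha' hb'

/-- The half-open tree segment `[u, m)` as a finset. -/
noncomputable def seg (T : Tr N) (u m : Fin (N+1)) : Finset (Fin (N+1)) :=
  Finset.univ.filter (fun s => Anc T u s ∧ Anc T s m ∧ s ≠ m)

lemma mem_seg {T : Tr N} {u m s : Fin (N+1)} :
    s ∈ seg T u m ↔ Anc T u s ∧ Anc T s m ∧ s ≠ m := by
  simp [seg]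

lemma seg_self (T : Tr N) (u : Fin (N+1)) : seg T u u = ∅ := by
  ext s
  simp only [mem_seg, Finset.notMem_empty, iff_false]
  rintro ⟨h1, h2, h3⟩
  exact h3 (anc_antisymm h2 h1)

lemma seg_ne_zero {T : Tr N} {u m s : Fin (N+1)} (h : s ∈ seg T u m) : s ≠ 0 := by
  obtain ⟨_, h2, h3⟩ := mem_seg.1 h
  intro hs
  subst hs
  exact h3 (anc_zero_eq h2).symm

lemma seg_insert {T : Tr N} {u m : Fin (N+1)} (h : Anc T u m) (hne : u ≠ m) :
    seg T u m = insert u (seg T (T.1 u) m) ∧ u ∉ seg T (T.1 u) m ∧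
      u ≠ 0 ∧ Anc T (T.1 u) m := by
  obtain ⟨h0, hpanc⟩ := anc_head h hne
  have hnotmem : u ∉ seg T (T.1 u) m := by
    intro hu
    have := (mem_seg.1 hu).1.le
    exact absurd (lt_of_le_of_lt this (T.2.2 u h0)) (lt_irrefl u)
  refine ⟨?_, hnotmem, h0, hpanc⟩
  ext s
  simp only [mem_seg, Finset.mem_insert]
  constructor
  · rintro ⟨h1, h2, h3⟩
    by_cases hsu : s = u
    · exact Or.inl hsu
    · have hus : u ≠ s := fun he => hsu he.symm
      obtain ⟨_, h1'⟩ := anc_head h1 hus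
      exact Or.inr ⟨h1', h2, h3⟩
  · rintro (rfl | ⟨h1, h2, h3⟩)
    · exact ⟨anc_refl T s, h, hne⟩
    · exact ⟨Relation.ReflTransGen.head ⟨rfl, h0⟩ h1, h2, h3⟩

/-- Telescoping a function difference along a tree segment. -/
lemma seg_telescope {T : Tr N} (f : Fin (N+1) → ℝ) :
    ∀ u m : Fin (N+1), Anc T u m → f u - f m = ∑ s ∈ seg T u m, (f s - f (T.1 s)) := by
  intro u
  induction u using WellFoundedLT.induction with
  | ind u ih =>
    intro m hanc
    by_cases hne : u = m
    · subst hne; rw [seg_self]; simp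
    · obtain ⟨hins, hnm, h0, hpanc⟩ := seg_insert hanc hne
      rw [hins, Finset.sum_insert hnm, ← ih (T.1 u) (T.2.2 u h0) m hpanc]
      ring

/-- Common ancestors: `meet` belongs and is maximal. -/
lemma meet_spec (T : Tr N) (x y : Fin (N+1)) :
    (Anc T x (meet T x y) ∧ Anc T y (meet T x y)) ∧
      ∀ a, Anc T x a → Anc T y a → a ≤ meet T x y := by
  classical
  have hne : (Finset.univ.filter (fun a => Anc T x a ∧ Anc T y a)).Nonempty :=
    ⟨0, by simp [anc_zero]⟩
  have hmax : meet T x y = (Finset.univ.filter (fun a => Anc T x a ∧ Anc T y a)).max' hne := by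
    rw [meet, ← Finset.coe_max' hne]
    rfl
  constructor
  · have h := Finset.max'_mem _ hne
    rw [Finset.mem_filter] at h
    rw [hmax]; exact h.2
  · intro a h1 h2
    rw [hmax]
    exact Finset.le_max' _ a (by simp [h1, h2])

lemma meet_anc_left (T : Tr N) (x y : Fin (N+1)) : Anc T x (meet T x y) :=
  ((meet_spec T x y).1).1

lemma meet_anc_right (T : Tr N) (x y : Fin (N+1)) : Anc T y (meet T x y) :=
  ((meet_spec T x y).1).2

lemma le_meet {T : Tr N} {x y a : Fin (N+1)} (h1 : Anc T x a) (h2 : Anc T y a) :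
    a ≤ meet T x y := (meet_spec T x y).2 a h1 h2

/-- The treeDist summation set splits as a union of two segments. -/
lemma treeDist_filter_eq (T : Tr N) (x y : Fin (N+1)) :
    Finset.univ.filter (fun s =>
      (Anc T x s ∨ Anc T y s) ∧ Anc T s (meet T x y) ∧ s ≠ meet T x y)
    = seg T x (meet T x y) ∪ seg T y (meet T x y) := by
  ext s
  simp only [Finset.mem_filter, Finset.mem_univ, true_and, Finset.mem_union, mem_seg]
  tauto

lemma seg_disjoint_meet (T : Tr N) (x y : Fin (N+1)) :
    Disjoint (seg T x (meet T x y)) (seg T y (meet T x y)) := by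
  rw [Finset.disjoint_left]
  intro s hsx hsy
  obtain ⟨h1, h2, h3⟩ := mem_seg.1 hsx
  obtain ⟨h1', _, _⟩ := mem_seg.1 hsy
  exact h3 (le_antisymm (le_meet h1 h1') h2.le)

lemma treeDist_eq_segs (d' : Fin (N+1) → Fin (N+1) → ℝ) (T : Tr N) (x y : Fin (N+1)) :
    treeDist d' T x y = (∑ s ∈ seg T x (meet T x y), d' s (T.1 s))
      + ∑ s ∈ seg T y (meet T x y), d' s (T.1 s) := by
  rw [treeDist, treeDist_filter_eq, Finset.sum_union (seg_disjoint_meet T x y)]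

lemma treeDist_nonneg {d' : Fin (N+1) → Fin (N+1) → ℝ} (hd' : ∀ a b, 0 ≤ d' a b)
    (T : Tr N) (x y : Fin (N+1)) : 0 ≤ treeDist d' T x y := by
  rw [treeDist]
  exact Finset.sum_nonneg fun s _ => hd' _ _

lemma treeDist_self (d' : Fin (N+1) → Fin (N+1) → ℝ) (T : Tr N) (x : Fin (N+1)) :
    treeDist d' T x x = 0 := by
  have hm : meet T x x = x :=
    le_antisymm (meet_anc_left T x x).le (le_meet (anc_refl T x) (anc_refl T x))
  rw [treeDist_eq_segs, hm, seg_self]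
  simp

lemma meet_parent {T : Tr N} {k : Fin (N+1)} (hk : k ≠ 0) : meet T k (T.1 k) = T.1 k := by
  refine le_antisymm ?_ (le_meet (anc_parent hk) (anc_refl T _))
  exact (meet_anc_right T k (T.1 k)).le

lemma treeDist_edge {d' : Fin (N+1) → Fin (N+1) → ℝ} (T : Tr N) {k : Fin (N+1)}
    (hk : k ≠ 0) : treeDist d' T k (T.1 k) = d' k (T.1 k) := by
  rw [treeDist_eq_segs, meet_parent hk, seg_self]
  have hne : k ≠ T.1 k := ne_of_gt (T.2.2 k hk)
  obtain ⟨hins, hnm, _, _⟩ := seg_insert (anc_parent (T := T) hk) hne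
  rw [hins, seg_self]
  simp

end TCS
namespace TCS

variable {N : ℕ}

/-- The extremal Lipschitz function for the tree norm. -/
noncomputable def treeF (d' : Fin (N+1) → Fin (N+1) → ℝ) (T : Tr N) (c : Fin (N+1) → ℝ)
    (n : Fin (N+1)) : ℝ :=
  if h : n = 0 then 0
  else treeF d' T c (T.1 n) + (if 0 ≤ c n then 1 else -1) * d' n (T.1 n)
termination_by n.val
decreasing_by exact T.2.2 n h

lemma treeF_zero (d' : Fin (N+1) → Fin (N+1) → ℝ) (T : Tr N) (c : Fin (N+1) → ℝ) :
    treeF d' T c 0 = 0 := by rw [treeF]; simp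

lemma treeF_step (d' : Fin (N+1) → Fin (N+1) → ℝ) (T : Tr N) (c : Fin (N+1) → ℝ)
    {n : Fin (N+1)} (h : n ≠ 0) :
    treeF d' T c n - treeF d' T c (T.1 n)
      = (if 0 ≤ c n then (1:ℝ) else -1) * d' n (T.1 n) := by
  conv_lhs => rw [treeF]
  simp [h]

lemma treeF_lip {d' : Fin (N+1) → Fin (N+1) → ℝ} (hd' : ∀ a b, 0 ≤ d' a b) (T : Tr N)
    (c : Fin (N+1) → ℝ) (a b : Fin (N+1)) :
    |treeF d' T c a - treeF d' T c b| ≤ treeDist d' T a b := by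
  have key : ∀ u m : Fin (N+1), Anc T u m →
      |treeF d' T c u - treeF d' T c m| ≤ ∑ s ∈ seg T u m, d' s (T.1 s) := by
    intro u m h
    rw [seg_telescope (treeF d' T c) u m h]
    refine le_trans (Finset.abs_sum_le_sum_abs _ _) (Finset.sum_le_sum fun s hs => ?_)
    rw [treeF_step d' T c (seg_ne_zero hs), abs_mul]
    have : |if 0 ≤ c s then (1:ℝ) else -1| = 1 := by split <;> norm_num
    rw [this, one_mul, abs_of_nonneg (hd' _ _)]
  rw [treeDist_eq_segs]
  calc |treeF d' T c a - treeF d' T c b|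
      ≤ |treeF d' T c a - treeF d' T c (meet T a b)|
        + |treeF d' T c (meet T a b) - treeF d' T c b| := by
        exact abs_sub_le _ _ _
    _ ≤ _ := by
        refine add_le_add (key a _ (meet_anc_left T a b)) ?_
        rw [abs_sub_comm]
        exact key b _ (meet_anc_right T a b)

lemma expand_pair {T : Tr N} {c ν : Fin (N+1) → ℝ}
    (hexp : ∀ z, ν z = ∑ k ∈ Finset.univ.filter (· ≠ (0 : Fin (N+1))), c k * mol k (T.1 k) z)
    (f : Fin (N+1) → ℝ) :
    ∑ z, ν z * f z
      = ∑ k ∈ Finset.univ.filter (· ≠ (0 : Fin (N+1))), c k * (f k - f (T.1 k)) := by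
  calc ∑ z, ν z * f z
      = ∑ z, ∑ k ∈ Finset.univ.filter (· ≠ (0 : Fin (N+1))),
          (c k * mol k (T.1 k) z) * f z := by
        refine Finset.sum_congr rfl fun z _ => ?_
        rw [hexp z, Finset.sum_mul]
    _ = ∑ k ∈ Finset.univ.filter (· ≠ (0 : Fin (N+1))), ∑ z,
          (c k * mol k (T.1 k) z) * f z := Finset.sum_comm
    _ = _ := by
        refine Finset.sum_congr rfl fun k _ => ?_
        rw [← sum_mol_mul k (T.1 k) f, Finset.mul_sum]
        exact Finset.sum_congr rfl fun z _ => by ring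

/-- The transportation norm w.r.t. the tree metric is the weighted ℓ¹-norm of
the coefficients. -/
lemma tcNorm_tree {d' : Fin (N+1) → Fin (N+1) → ℝ} (hd' : IsMetric d') (T : Tr N)
    {c ν : Fin (N+1) → ℝ}
    (hexp : ∀ z, ν z = ∑ k ∈ Finset.univ.filter (· ≠ (0 : Fin (N+1))), c k * mol k (T.1 k) z) :
    tcNorm (treeDist d' T) 0 ν
      = ∑ k ∈ Finset.univ.filter (· ≠ (0 : Fin (N+1))), |c k| * d' k (T.1 k) := by
  apply IsGreatest.csSup_eq
  constructor
  · refine ⟨treeF d' T c, treeF_zero d' T c, treeF_lip (fun a b => hd'.nonneg a b) T c, ?_⟩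
    rw [expand_pair hexp]
    refine Finset.sum_congr rfl fun k hk => ?_
    have hk0 : k ≠ 0 := by simpa using (Finset.mem_filter.1 hk).2
    rw [treeF_step d' T c hk0]
    rcases le_or_gt 0 (c k) with h | h
    · rw [if_pos h, abs_of_nonneg h]; ring
    · rw [if_neg (not_le.2 h), abs_of_neg h]; ring
  · rintro e ⟨f, hf0, hLip, rfl⟩
    rw [expand_pair hexp]
    refine Finset.sum_le_sum fun k hk => ?_
    have hk0 : k ≠ 0 := by simpa using (Finset.mem_filter.1 hk).2
    calc c k * (f k - f (T.1 k)) ≤ |c k * (f k - f (T.1 k))| := le_abs_self _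
      _ = |c k| * |f k - f (T.1 k)| := abs_mul _ _
      _ ≤ |c k| * d' k (T.1 k) := by
          refine mul_le_mul_of_nonneg_left ?_ (abs_nonneg _)
          have := hLip k (T.1 k)
          rwa [treeDist_edge T hk0] at this

/-- Tree distance dominates the metric. -/
lemma dist_le_treeDist {d' : Fin (N+1) → Fin (N+1) → ℝ} (hd' : IsMetric d') (T : Tr N)
    (x y : Fin (N+1)) : d' x y ≤ treeDist d' T x y := by
  have key : ∀ u m : Fin (N+1), Anc T u m →
      d' u m ≤ ∑ s ∈ seg T u m, d' s (T.1 s) := by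
    intro u m h
    have ht := seg_telescope (T := T) (fun z => d' z m) u m h
    have hmm : d' m m = 0 := (hd'.2.1 m m).2 rfl
    rw [hmm, sub_zero] at ht
    rw [ht]
    exact Finset.sum_le_sum fun s _ => by
      have := hd'.2.2 s (T.1 s) m; linarith
  rw [treeDist_eq_segs]
  have h1 := key x _ (meet_anc_left T x y)
  have h2 := key y _ (meet_anc_right T x y)
  have h3 := hd'.2.2 x (meet T x y) y
  rw [hd'.1 (meet T x y) y] at h3
  linarith

/-- Telescoping identity for indicators along the ancestor chain. -/
lemma tel {T : Tr N} (z : Fin (N+1)) : ∀ w : Fin (N+1),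
    ∑ k ∈ Finset.univ.filter (fun k => k ≠ 0 ∧ Anc T w k), (indic k z - indic (T.1 k) z)
      = indic w z - indic 0 z := by
  intro w
  induction w using WellFoundedLT.induction with
  | ind w ih =>
    by_cases h0 : w = 0
    · subst h0
      have he : Finset.univ.filter (fun k => k ≠ (0 : Fin (N+1)) ∧ Anc T 0 k) = ∅ := by
        ext k
        simp only [Finset.mem_filter, Finset.mem_univ, true_and, Finset.notMem_empty,
          iff_false, not_and]
        intro hk ha
        exact hk (anc_zero_eq ha)
      rw [he]
      simp
    · have hset : Finset.univ.filter (fun k => k ≠ 0 ∧ Anc T w k)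
          = insert w (Finset.univ.filter (fun k => k ≠ 0 ∧ Anc T (T.1 w) k)) := by
        ext k
        simp only [Finset.mem_filter, Finset.mem_univ, true_and, Finset.mem_insert]
        constructor
        · rintro ⟨hk, ha⟩
          by_cases hkw : k = w
          · exact Or.inl hkw
          · obtain ⟨_, ha'⟩ := anc_head ha (fun he => hkw he.symm)
            exact Or.inr ⟨hk, ha'⟩
        · rintro (rfl | ⟨hk, ha⟩)
          · exact ⟨h0, anc_refl T k⟩
          · exact ⟨hk, Relation.ReflTransGen.head ⟨rfl, h0⟩ ha⟩
      have hnm : w ∉ Finset.univ.filter (fun k => k ≠ 0 ∧ Anc T (T.1 w) k) := by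
        simp only [Finset.mem_filter, Finset.mem_univ, true_and, not_and]
        intro _ ha
        exact absurd (lt_of_le_of_lt ha.le (T.2.2 w h0)) (lt_irrefl w)
      rw [hset, Finset.sum_insert hnm, ih (T.1 w) (T.2.2 w h0)]
      ring

lemma tel' {T : Tr N} (z : Fin (N+1)) (w : Fin (N+1)) :
    ∑ k ∈ Finset.univ.filter (· ≠ (0 : Fin (N+1))),
      (if Anc T w k then (1:ℝ) else 0) * mol k (T.1 k) z = indic w z - indic 0 z := by
  calc ∑ k ∈ Finset.univ.filter (· ≠ (0 : Fin (N+1))),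
        (if Anc T w k then (1:ℝ) else 0) * mol k (T.1 k) z
      = ∑ k ∈ Finset.univ.filter (· ≠ (0 : Fin (N+1))),
          (if Anc T w k then mol k (T.1 k) z else 0) := by
        refine Finset.sum_congr rfl fun k _ => ?_
        split <;> simp
    _ = ∑ k ∈ (Finset.univ.filter (· ≠ (0 : Fin (N+1)))).filter (fun k => Anc T w k),
          mol k (T.1 k) z := (Finset.sum_filter _ _).symm
    _ = ∑ k ∈ Finset.univ.filter (fun k => k ≠ 0 ∧ Anc T w k), mol k (T.1 k) z := by
        rw [Finset.filter_filter]
    _ = indic w z - indic 0 z := by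
        rw [← tel (T := T) z w]
        exact Finset.sum_congr rfl fun k _ => rfl

/-- Expansion of a (scaled) molecule in the tree basis. -/
lemma mol_expand (T : Tr N) (x y z : Fin (N+1)) (t : ℝ) :
    t * mol x y z = ∑ k ∈ Finset.univ.filter (· ≠ (0 : Fin (N+1))),
      (t * ((if Anc T x k then (1:ℝ) else 0) - (if Anc T y k then 1 else 0)))
        * mol k (T.1 k) z := by
  have hsplit : ∀ k : Fin (N+1),
      (t * ((if Anc T x k then (1:ℝ) else 0) - (if Anc T y k then 1 else 0)))
        * mol k (T.1 k) z
      = t * ((if Anc T x k then (1:ℝ) else 0) * mol k (T.1 k) z)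
        - t * ((if Anc T y k then (1:ℝ) else 0) * mol k (T.1 k) z) := fun k => by ring
  rw [Finset.sum_congr rfl fun k _ => hsplit k, Finset.sum_sub_distrib,
    ← Finset.mul_sum, ← Finset.mul_sum, tel' (T := T) z x, tel' (T := T) z y]
  simp only [mol]
  ring

/-- The weighted ℓ¹-norm of the molecule coefficients equals the tree distance. -/
lemma coef_abs_sum (d' : Fin (N+1) → Fin (N+1) → ℝ) (T : Tr N) (x y : Fin (N+1)) :
    ∑ k ∈ Finset.univ.filter (· ≠ (0 : Fin (N+1))),
      |((if Anc T x k then (1:ℝ) else 0) - (if Anc T y k then 1 else 0))| * d' k (T.1 k)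
      = treeDist d' T x y := by
  have habs : ∀ k : Fin (N+1),
      |((if Anc T x k then (1:ℝ) else 0) - (if Anc T y k then 1 else 0))|
        = if (Anc T x k ↔ Anc T y k) then 0 else 1 := by
    intro k
    by_cases h1 : Anc T x k <;> by_cases h2 : Anc T y k <;> simp [h1, h2]
  calc ∑ k ∈ Finset.univ.filter (· ≠ (0 : Fin (N+1))),
        |((if Anc T x k then (1:ℝ) else 0) - (if Anc T y k then 1 else 0))| * d' k (T.1 k)
      = ∑ k ∈ Finset.univ.filter (· ≠ (0 : Fin (N+1))),
          (if ¬(Anc T x k ↔ Anc T y k) then d' k (T.1 k) else 0) := by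
        refine Finset.sum_congr rfl fun k _ => ?_
        rw [habs k]
        by_cases h : Anc T x k ↔ Anc T y k <;> simp [h]
    _ = ∑ k ∈ (Finset.univ.filter (· ≠ (0 : Fin (N+1)))).filter
          (fun k => ¬(Anc T x k ↔ Anc T y k)), d' k (T.1 k) := (Finset.sum_filter _ _).symm
    _ = treeDist d' T x y := by
        rw [treeDist]
        congr 1
        rw [Finset.filter_filter]
        ext k
        simp only [Finset.mem_filter, Finset.mem_univ, true_and]
        constructor
        · rintro ⟨hk0, hxor⟩
          by_cases h1 : Anc T x k
          · have h2 : ¬ Anc T y k := fun h2 => hxor ⟨fun _ => h2, fun _ => h1⟩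
            have hkm : Anc T k (meet T x y) := by
              rcases anc_chain x k (meet T x y) h1 (meet_anc_left T x y) with h | h
              · exact h
              · exact absurd (anc_trans (meet_anc_right T x y) h) h2
            refine ⟨Or.inl h1, hkm, fun he => h2 ?_⟩
            rw [he]; exact meet_anc_right T x y
          · have h2 : Anc T y k := by
              by_contra h2
              exact hxor ⟨fun h => absurd h h1, fun h => absurd h h2⟩
            have hkm : Anc T k (meet T x y) := by
              rcases anc_chain y k (meet T x y) h2 (meet_anc_right T x y) with h | h
              · exact h
              · exact absurd (anc_trans (meet_anc_left T x y) h) h1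
            refine ⟨Or.inr h2, hkm, fun he => h1 ?_⟩
            rw [he]; exact meet_anc_left T x y
        · rintro ⟨hor, hkm, hkne⟩
          have hk0 : k ≠ 0 := by
            rintro rfl
            exact hkne (anc_zero_eq hkm).symm
          refine ⟨hk0, ?_⟩
          rcases hor with h1 | h1
          · intro hiff
            exact hkne (le_antisymm (le_meet h1 (hiff.1 h1)) hkm.le)
          · intro hiff
            exact hkne (le_antisymm (le_meet (hiff.2 h1) h1) hkm.le)

end TCS
namespace TCS

variable {N : ℕ}

lemma mol_inj {V : Type*} [DecidableEq V] {a b a' b' : V} (hab : a ≠ b) (hab' : a' ≠ b')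
    (h : mol a b = mol a' b') : a = a' ∧ b = b' := by
  have key : ∀ x y x' y' : V, x ≠ y → x' ≠ y' → mol x y = mol x' y' → x = x' := by
    intro x y x' y' hxy hxy' hh
    by_contra hne
    have hx := congrFun hh x
    simp only [mol, indic, if_pos rfl] at hx
    rw [if_neg hxy, if_neg hne] at hx
    by_cases hxb : x = y' <;> simp [hxb] at hx <;> norm_num at hx
  refine ⟨key a b a' b' hab hab' h, key b a b' a' (Ne.symm hab) (Ne.symm hab') ?_⟩
  funext z
  have hz := congrFun h z
  simp only [mol] at hz ⊢
  linarith

lemma sum_mol_over {V : Type*} [Fintype V] [DecidableEq V] (A : Finset V) (u v : V) :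
    ∑ z ∈ A, mol u v z = (if u ∈ A then (1:ℝ) else 0) - (if v ∈ A then 1 else 0) := by
  simp [mol, indic, Finset.sum_sub_distrib, Finset.sum_ite_eq']

/-- Connectivity: the edges of a molecule basis connect any set containing `0`
to its complement. -/
lemma crossing_edge {b : Fin (N+1) → Fin (N+1) → ℝ}
    {bstar : Fin (N+1) → (Fin (N+1) → ℝ) → ℝ} (hbasis : IsFreeBasis N b bstar)
    (S : Finset (Fin (N+1))) (h0 : (0 : Fin (N+1)) ∈ S) (hS : S ≠ Finset.univ) :
    ∃ n : Fin (N+1), n ≠ 0 ∧ ∀ u w : Fin (N+1), b n = mol u w →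
      ¬ (u ∈ S ↔ w ∈ S) := by
  by_contra hcon
  push_neg at hcon
  obtain ⟨w, hw⟩ : ∃ w : Fin (N+1), w ∉ S := by
    by_contra h; push_neg at h; exact hS (Finset.eq_univ_iff_forall.2 h)
  have hexp := hbasis.2.1 (mol w 0) (sum_mol w 0)
  have key : ∑ z ∈ Sᶜ, mol w 0 z = 1 := by
    rw [sum_mol_over]
    simp [Finset.mem_compl, hw, h0]
  rw [Finset.sum_congr rfl (fun z _ => hexp z)] at key
  rw [Finset.sum_comm] at key
  have hzero : ∀ n ∈ Finset.univ.filter (· ≠ (0 : Fin (N+1))),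
      ∑ z ∈ Sᶜ, bstar n (mol w 0) * b n z = 0 := by
    intro n hn
    have hn0 : n ≠ 0 := by simpa using (Finset.mem_filter.1 hn).2
    obtain ⟨u', w', hbn, hiff⟩ := hcon n hn0
    rw [← Finset.mul_sum, hbn, sum_mol_over]
    have : (u' ∈ Sᶜ) ↔ (w' ∈ Sᶜ) := by
      simp only [Finset.mem_compl]; exact not_iff_not.2 hiff
    by_cases hu : u' ∈ Sᶜ
    · rw [if_pos hu, if_pos (this.1 hu)]; ring
    · rw [if_neg hu, if_neg (fun hw' => hu (this.2 hw'))]; ring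
  rw [Finset.sum_congr rfl hzero] at key
  simp at key

/-- Existence of a compatible enumeration, parent map and edge matching for a
molecule basis. -/
lemma exists_enum {b : Fin (N+1) → Fin (N+1) → ℝ}
    {bstar : Fin (N+1) → (Fin (N+1) → ℝ) → ℝ} (hbasis : IsFreeBasis N b bstar)
    (hmol : ∀ n : Fin (N+1), n ≠ 0 → ∃ x y : Fin (N+1), x ≠ y ∧ b n = mol x y) :
    ∃ v par σ : Fin (N+1) → Fin (N+1),
      v 0 = 0 ∧ par 0 = 0 ∧ σ 0 = 0 ∧
      Function.Injective v ∧ Function.Bijective σ ∧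
      (∀ i : Fin (N+1), i ≠ 0 → par i < i ∧ σ i ≠ 0 ∧
        (b (σ i) = mol (v i) (v (par i)) ∨ b (σ i) = mol (v (par i)) (v i))) := by
  have main : ∀ k : ℕ, k ≤ N → ∃ v par σ : Fin (N+1) → Fin (N+1),
      v 0 = 0 ∧ par 0 = 0 ∧ σ 0 = 0 ∧
      (∀ i j : Fin (N+1), i.val ≤ k → j.val ≤ k → v i = v j → i = j) ∧
      (∀ i : Fin (N+1), i ≠ 0 → i.val ≤ k → par i < i ∧ σ i ≠ 0 ∧
        (b (σ i) = mol (v i) (v (par i)) ∨ b (σ i) = mol (v (par i)) (v i))) ∧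
      (∀ i j : Fin (N+1), i ≠ 0 → j ≠ 0 → i.val ≤ k → j.val ≤ k → σ i = σ j → i = j) := by
    intro k
    induction k with
    | zero =>
      intro _
      refine ⟨fun _ => 0, fun _ => 0, fun _ => 0, rfl, rfl, rfl, ?_, ?_, ?_⟩
      · intro i j hi hj _
        have hi' : i = 0 := Fin.ext (Nat.le_zero.mp hi)
        have hj' : j = 0 := Fin.ext (Nat.le_zero.mp hj)
        rw [hi', hj']
      · intro i h0 hi
        exact absurd (Fin.ext (Nat.le_zero.mp hi)) h0
      · intro i j h0 _ hi _ _
        exact absurd (Fin.ext (Nat.le_zero.mp hi)) h0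
    | succ k ih =>
      intro hk
      obtain ⟨v, par, σ, hv0, hp0, hσ0, hinj, hedge, hσinj⟩ := ih (Nat.le_of_succ_le hk)
      set S : Finset (Fin (N+1)) :=
        (Finset.univ.filter (fun i : Fin (N+1) => i.val ≤ k)).image v with hSdef
      have h0S : (0 : Fin (N+1)) ∈ S := by
        rw [hSdef]
        exact Finset.mem_image.2 ⟨0, by simp, hv0⟩
      have hScard : S.card ≤ k + 1 := by
        refine le_trans (Finset.card_image_le) ?_
        have : (Finset.univ.filter (fun i : Fin (N+1) => i.val ≤ k))
            = (Finset.univ.image (Fin.castLE (by omega : k + 1 ≤ N + 1))) := by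
          ext i
          simp only [Finset.mem_filter, Finset.mem_univ, true_and, Finset.mem_image]
          constructor
          · intro hi
            refine ⟨⟨i.val, by omega⟩, ?_⟩
            ext
            simp
          · rintro ⟨j, rfl⟩
            simpa using Nat.lt_succ_iff.mp j.isLt
        rw [this]
        exact le_trans Finset.card_image_le (by simp)
      have hSne : S ≠ Finset.univ := by
        intro he
        have := Finset.card_univ (α := Fin (N+1))
        rw [he, this] at hScard
        simp at hScard
        omega
      obtain ⟨n, hn0, hcross⟩ := crossing_edge hbasis S h0S hSne
      obtain ⟨xx, yy, hxy, hbn⟩ := hmol n hn0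
      have hx := hcross xx yy hbn
      -- identify the inside and outside endpoints
      obtain ⟨ins, outs, hio, hinS, houtS, hor⟩ :
          ∃ ins outs : Fin (N+1), ins ≠ outs ∧ ins ∈ S ∧ outs ∉ S ∧
            (b n = mol ins outs ∨ b n = mol outs ins) := by
        by_cases hxin : xx ∈ S
        · have hyout : yy ∉ S := fun hy => hx ⟨fun _ => hy, fun _ => hxin⟩
          exact ⟨xx, yy, hxy, hxin, hyout, Or.inl hbn⟩
        · have hyin : yy ∈ S := by
            by_contra hy
            exact hx ⟨fun h => absurd h hxin, fun h => absurd h hy⟩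
          exact ⟨yy, xx, Ne.symm hxy, hyin, hxin, Or.inr hbn⟩
      obtain ⟨j, hjk, hjv⟩ : ∃ j : Fin (N+1), j.val ≤ k ∧ v j = ins := by
        rw [hSdef] at hinS
        obtain ⟨j, hj, hjv⟩ := Finset.mem_image.1 hinS
        exact ⟨j, by simpa using (Finset.mem_filter.1 hj).2, hjv⟩
      set K : Fin (N+1) := ⟨k+1, by omega⟩ with hKdef
      have hKne : ∀ i : Fin (N+1), i.val ≤ k → i ≠ K := by
        intro i hi he
        rw [he, hKdef] at hi
        simp at hi
      refine ⟨Function.update v K outs, Function.update par K j, Function.update σ K n,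
        ?_, ?_, ?_, ?_, ?_, ?_⟩
      · rw [Function.update_of_ne (hKne 0 (by simp)) _ _, hv0]
      · rw [Function.update_of_ne (hKne 0 (by simp)) _ _, hp0]
      · rw [Function.update_of_ne (hKne 0 (by simp)) _ _, hσ0]
      · -- injectivity of updated v
        intro i j' hi hj' hvij
        have hcases : ∀ i : Fin (N+1), i.val ≤ k + 1 → i = K ∨ (i ≠ K ∧ i.val ≤ k) := by
          intro i hi
          by_cases h : i = K
          · exact Or.inl h
          · refine Or.inr ⟨h, ?_⟩
            have : i.val ≠ k + 1 := fun he => h (Fin.ext he)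
            omega
        rcases hcases i hi with rfl | ⟨hiK, hik⟩
        · rcases hcases j' hj' with rfl | ⟨hjK, hjk'⟩
          · rfl
          · exfalso
            rw [Function.update_self, Function.update_of_ne hjK] at hvij
            exact houtS (hvij ▸ Finset.mem_image.2 ⟨j', by simp [hjk'], rfl⟩)
        · rcases hcases j' hj' with rfl | ⟨hjK, hjk'⟩
          · exfalso
            rw [Function.update_self, Function.update_of_ne hiK] at hvij
            exact houtS (hvij ▸ Finset.mem_image.2 ⟨i, by simp [hik], rfl⟩)
          · rw [Function.update_of_ne hiK, Function.update_of_ne hjK] at hvij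
            exact hinj i j' hik hjk' hvij
      · -- edge property
        intro i hi0 hik1
        by_cases hiK : i = K
        · subst hiK
          have e1 : Function.update par K j K = j := Function.update_self _ _ _
          have e2 : Function.update σ K n K = n := Function.update_self _ _ _
          have e3 : Function.update v K outs K = outs := Function.update_self _ _ _
          have e4 : Function.update v K outs j = v j := Function.update_of_ne (hKne j hjk) _ _
          rw [e1, e2, e3, e4, hjv]
          refine ⟨?_, hn0, ?_⟩
          · have hKval : K.val = k + 1 := rfl
            exact Fin.lt_def.mpr (by omega)
          · rcases hor with h | h
            · exact Or.inr h
            · exact Or.inl h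
        · have hik : i.val ≤ k := by
            have : i.val ≠ k + 1 := fun he => hiK (Fin.ext he)
            omega
          obtain ⟨h1, h2, h3⟩ := hedge i hi0 hik
          have hpi : (par i).val < i.val := Fin.lt_def.mp h1
          have hpiK : par i ≠ K := hKne (par i) (by omega)
          have e1 : Function.update par K j i = par i := Function.update_of_ne hiK _ _
          have e2 : Function.update σ K n i = σ i := Function.update_of_ne hiK _ _
          have e3 : Function.update v K outs i = v i := Function.update_of_ne hiK _ _
          have e4 : Function.update v K outs (par i) = v (par i) :=
            Function.update_of_ne hpiK _ _
          rw [e1, e2, e3, e4]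
          exact ⟨h1, h2, h3⟩
      · -- injectivity of updated σ
        intro i j' hi0 hj0 hik1 hjk1 hσij
        have hcases : ∀ i : Fin (N+1), i.val ≤ k + 1 → i = K ∨ (i ≠ K ∧ i.val ≤ k) := by
          intro i hi
          by_cases h : i = K
          · exact Or.inl h
          · refine Or.inr ⟨h, ?_⟩
            have : i.val ≠ k + 1 := fun he => h (Fin.ext he)
            omega
        have hedge_in : ∀ m : Fin (N+1), m ≠ 0 → m.val ≤ k → σ m = n → False := by
          intro m hm0 hmk hσm
          obtain ⟨h1, _, h3⟩ := hedge m hm0 hmk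
          have hpm : (par m).val < m.val := Fin.lt_def.mp h1
          have hvne : v m ≠ v (par m) := by
            intro he
            have heq := hinj m (par m) hmk (by omega) he
            rw [← heq] at h1
            exact lt_irrefl m h1
          have hmemm : v m ∈ S := Finset.mem_image.2 ⟨m, by simp [hmk], rfl⟩
          have hmemp : v (par m) ∈ S := Finset.mem_image.2 ⟨par m, by
            simp only [Finset.mem_filter, Finset.mem_univ, true_and]
            omega, rfl⟩
          rw [hσm, hbn] at h3
          have hxyS : xx ∈ S ∧ yy ∈ S := by
            rcases h3 with h3 | h3
            · obtain ⟨he1, he2⟩ := mol_inj hxy hvne h3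
              exact ⟨by rw [he1]; exact hmemm, by rw [he2]; exact hmemp⟩
            · obtain ⟨he1, he2⟩ := mol_inj hxy (Ne.symm hvne) h3
              exact ⟨by rw [he1]; exact hmemp, by rw [he2]; exact hmemm⟩
          have hxout : xx ∉ S ∨ yy ∉ S := by
            rcases hor with hh | hh
            · obtain ⟨he1, he2⟩ := mol_inj hio hxy (hh.symm.trans hbn)
              exact Or.inr (by rw [← he2]; exact houtS)
            · obtain ⟨he1, he2⟩ := mol_inj (Ne.symm hio) hxy (hh.symm.trans hbn)
              exact Or.inl (by rw [← he1]; exact houtS)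
          rcases hxout with hh | hh
          · exact hh hxyS.1
          · exact hh hxyS.2
        rcases hcases i hik1 with rfl | ⟨hiK, hik⟩
        · rcases hcases j' hjk1 with rfl | ⟨hjK, hjk'⟩
          · rfl
          · exfalso
            rw [Function.update_self, Function.update_of_ne hjK] at hσij
            exact hedge_in j' hj0 hjk' hσij.symm
        · rcases hcases j' hjk1 with rfl | ⟨hjK, hjk'⟩
          · exfalso
            rw [Function.update_of_ne hiK, Function.update_self] at hσij
            exact hedge_in i hi0 hik hσij
          · rw [Function.update_of_ne hiK, Function.update_of_ne hjK] at hσij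
            exact hσinj i j' hi0 hj0 hik hjk' hσij
  obtain ⟨v, par, σ, hv0, hp0, hσ0, hinj, hedge, hσinj⟩ := main N (le_refl N)
  have hle : ∀ i : Fin (N+1), i.val ≤ N := fun i => Nat.lt_succ_iff.mp i.isLt
  have hvinj : Function.Injective v := fun i j h => hinj i j (hle i) (hle j) h
  have hσinj' : Function.Injective σ := by
    intro i j h
    by_cases hi0 : i = 0
    · subst hi0
      by_cases hj0 : j = 0
      · rw [hj0]
      · rw [hσ0] at h
        exact absurd h.symm (hedge j hj0 (hle j)).2.1
    · by_cases hj0 : j = 0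
      · subst hj0
        rw [hσ0] at h
        exact absurd h (hedge i hi0 (hle i)).2.1
      · exact hσinj i j hi0 hj0 (hle i) (hle j) h
  exact ⟨v, par, σ, hv0, hp0, hσ0, hvinj,
    Finite.injective_iff_bijective.mp hσinj', fun i hi => hedge i hi (hle i)⟩

end TCS
namespace TCS

variable {N : ℕ}

lemma pullback_metric {d : Fin (N+1) → Fin (N+1) → ℝ} (hd : IsMetric d)
    {v : Fin (N+1) → Fin (N+1)} (hvinj : Function.Injective v) :
    IsMetric (fun i j => d (v i) (v j)) :=
  ⟨fun x y => hd.1 _ _,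
    fun x y => ⟨fun h => hvinj ((hd.2.1 _ _).1 h), fun h => (hd.2.1 _ _).2 (by rw [h])⟩,
    fun x y z => hd.2.2 _ _ _⟩

lemma mol_pull {v : Fin (N+1) → Fin (N+1)} (hvinj : Function.Injective v)
    (a b' z : Fin (N+1)) : mol (v a) (v b') (v z) = mol a b' z := by
  simp [mol, indic, hvinj.eq_iff]

/-- Core transfer: the ℓ¹-sum of a molecule basis equals a tree transportation norm. -/
lemma core_transfer {d : Fin (N+1) → Fin (N+1) → ℝ} (hd : IsMetric d)
    {b : Fin (N+1) → Fin (N+1) → ℝ} {bstar : Fin (N+1) → (Fin (N+1) → ℝ) → ℝ}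
    (hbasis : IsFreeBasis N b bstar)
    (v σ : Fin (N+1) → Fin (N+1)) (hvinj : Function.Injective v)
    (hσbij : Function.Bijective σ) (hσ0 : σ 0 = 0) (T : Tr N)
    (hedge : ∀ i : Fin (N+1), i ≠ 0 → σ i ≠ 0 ∧
      (b (σ i) = mol (v i) (v (T.1 i)) ∨ b (σ i) = mol (v (T.1 i)) (v i)))
    (μ : Fin (N+1) → ℝ) (hμ : ∑ x, μ x = 0) :
    ∑ n ∈ Finset.univ.filter (· ≠ (0 : Fin (N+1))), |bstar n μ| * tcNorm d 0 (b n)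
      = tcNorm (treeDist (fun i j => d (v i) (v j)) T) 0 (fun k => μ (v k)) := by
  classical
  have hd' : IsMetric (fun i j => d (v i) (v j)) := pullback_metric hd hvinj
  set c : Fin (N+1) → ℝ := fun k =>
    if b (σ k) = mol (v k) (v (T.1 k)) then bstar (σ k) μ else -(bstar (σ k) μ) with hcdef
  have hst : ∀ k : Fin (N+1), k ∈ Finset.univ.filter (· ≠ (0 : Fin (N+1)))
      ↔ σ k ∈ Finset.univ.filter (· ≠ (0 : Fin (N+1))) := by
    intro k
    simp only [Finset.mem_filter, Finset.mem_univ, true_and]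
    constructor
    · intro hk
      exact (hedge k hk).1
    · intro hk hk0
      rw [hk0, hσ0] at hk
      exact hk rfl
  have hvne : ∀ k : Fin (N+1), k ≠ 0 → v k ≠ v (T.1 k) := by
    intro k hk he
    exact absurd (hvinj he).symm (ne_of_lt (T.2.2 k hk))
  have hexp : ∀ z, (fun k => μ (v k)) z = ∑ k ∈ Finset.univ.filter (· ≠ (0 : Fin (N+1))),
      c k * mol k (T.1 k) z := by
    intro z
    dsimp only
    rw [hbasis.2.1 μ hμ (v z)]
    refine (Finset.sum_bijective σ hσbij hst ?_).symm
    intro k hk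
    have hk0 : k ≠ 0 := by simpa using (Finset.mem_filter.1 hk).2
    rcases (hedge k hk0).2 with h | h
    · rw [hcdef]
      simp only
      rw [if_pos h, h, mol_pull hvinj]
    · have hne : b (σ k) ≠ mol (v k) (v (T.1 k)) := by
        intro heq
        obtain ⟨he1, _⟩ := mol_inj (Ne.symm (hvne k hk0)) (hvne k hk0) (h.symm.trans heq)
        exact hvne k hk0 he1.symm
      rw [hcdef]
      simp only
      rw [if_neg hne, h, mol_pull hvinj]
      simp only [mol]
      ring
  rw [tcNorm_tree hd' T hexp]
  refine (Finset.sum_bijective σ hσbij hst ?_).symm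
  intro k hk
  have hk0 : k ≠ 0 := by simpa using (Finset.mem_filter.1 hk).2
  have habs : |c k| = |bstar (σ k) μ| := by
    rw [hcdef]
    simp only
    split
    · rfl
    · exact abs_neg _
  rw [habs]
  rcases (hedge k hk0).2 with h | h
  · rw [h, tcNorm_mol hd 0 (hvne k hk0)]
  · rw [h, tcNorm_mol hd 0 (Ne.symm (hvne k hk0)), hd.1]

/-- Main lemma: a molecule basis yields a compatible tree whose distortion is the
ℓ¹-distortion of the basis. -/
lemma main_tree {d : Fin (N+1) → Fin (N+1) → ℝ} (hd : IsMetric d)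
    {b : Fin (N+1) → Fin (N+1) → ℝ} {bstar : Fin (N+1) → (Fin (N+1) → ℝ) → ℝ}
    (hbasis : IsFreeBasis N b bstar)
    (hmol : ∀ n : Fin (N+1), n ≠ 0 → ∃ x y : Fin (N+1), x ≠ y ∧ b n = mol x y) :
    ∃ F : Equiv.Perm (Fin (N+1)), F 0 = 0 ∧ ∃ T : Tr N,
      sSup {c : ℝ | ∃ x y : Fin (N+1), x ≠ y ∧
          c = treeDist (fun i j => d (F i) (F j)) T x y / d (F x) (F y)}
        = d1Basis d b bstar ∧
      ∀ x y : Fin (N+1), x ≠ y →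
        d (F x) (F y) ≤ treeDist (fun i j => d (F i) (F j)) T x y ∧
        treeDist (fun i j => d (F i) (F j)) T x y ≤ d1Basis d b bstar * d (F x) (F y) := by
  classical
  obtain ⟨v, par, σ, hv0, hp0, hσ0, hvinj, hσbij, hedge⟩ := exists_enum hbasis hmol
  set F : Equiv.Perm (Fin (N+1)) :=
    Equiv.ofBijective v (Finite.injective_iff_bijective.mp hvinj) with hFdef
  have hFv : ∀ x, F x = v x := fun x => rfl
  set T : Tr N := ⟨par, hp0, fun n h => (hedge n h).1⟩ with hTdef
  have hT1 : T.1 = par := rfl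
  set d' : Fin (N+1) → Fin (N+1) → ℝ := fun i j => d (v i) (v j) with hd'def
  have hd' : IsMetric d' := pullback_metric hd hvinj
  have hedge' : ∀ i : Fin (N+1), i ≠ 0 → σ i ≠ 0 ∧
      (b (σ i) = mol (v i) (v (T.1 i)) ∨ b (σ i) = mol (v (T.1 i)) (v i)) := by
    intro i hi
    exact ⟨(hedge i hi).2.1, (hedge i hi).2.2⟩
  have core : ∀ μ : Fin (N+1) → ℝ, (∑ x, μ x = 0) →
      ∑ n ∈ Finset.univ.filter (· ≠ (0 : Fin (N+1))), |bstar n μ| * tcNorm d 0 (b n)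
        = tcNorm (treeDist d' T) 0 (fun k => μ (v k)) :=
    fun μ hμ => core_transfer hd hbasis v σ hvinj hσbij hσ0 T hedge' μ hμ
  have hpull : ∀ μ : Fin (N+1) → ℝ, tcNorm d' 0 (fun k => μ (v k)) = tcNorm d 0 μ := by
    intro μ
    have := tcNorm_pullback d F 0 μ
    rw [hFv 0, hv0] at this
    exact this
  set Ratio : Set ℝ := {c : ℝ | ∃ x y : Fin (N+1), x ≠ y ∧
      c = treeDist d' T x y / d' x y} with hRdef
  have hRbdd : BddAbove Ratio := by
    refine (Set.Finite.subset (Set.finite_range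
      (fun p : Fin (N+1) × Fin (N+1) => treeDist d' T p.1 p.2 / d' p.1 p.2)) ?_).bddAbove
    rintro r ⟨x, y, hxy, rfl⟩
    exact ⟨(x, y), rfl⟩
  set R : ℝ := sSup Ratio with hRdef2
  have hRnonneg : 0 ≤ R := by
    refine Real.sSup_nonneg ?_
    rintro r ⟨x, y, hxy, rfl⟩
    exact div_nonneg (treeDist_nonneg (fun a b' => hd'.nonneg a b') T x y)
      (le_of_lt (hd'.pos hxy))
  have hR1 : ∀ x y : Fin (N+1), x ≠ y → 1 ≤ R := by
    intro x y hxy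
    refine le_trans ?_ (le_csSup hRbdd ⟨x, y, hxy, rfl⟩)
    rw [le_div_iff₀ (hd'.pos hxy), one_mul]
    exact dist_le_treeDist hd' T x y
  have hcomp : ∀ x y : Fin (N+1), treeDist d' T x y ≤ R * d' x y := by
    intro x y
    by_cases hxy : x = y
    · subst hxy
      rw [treeDist_self, (hd'.2.1 x x).2 rfl, mul_zero]
    · have hmem : treeDist d' T x y / d' x y ∈ Ratio := ⟨x, y, hxy, rfl⟩
      have := le_csSup hRbdd hmem
      rwa [div_le_iff₀ (hd'.pos hxy)] at this
  -- each ratio is an element of the d1 set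
  have hratio_elt : ∀ x y : Fin (N+1), x ≠ y →
      ∃ μ : Fin (N+1) → ℝ, (∑ z, μ z = 0) ∧ tcNorm d 0 μ = 1 ∧
        treeDist d' T x y / d' x y
          = ∑ n ∈ Finset.univ.filter (· ≠ (0 : Fin (N+1))), |bstar n μ| * tcNorm d 0 (b n) := by
    intro x y hxy
    set t : ℝ := (d (v x) (v y))⁻¹ with htdef
    have hdpos : 0 < d (v x) (v y) := hd.pos (hvinj.ne hxy)
    have ht : 0 ≤ t := le_of_lt (inv_pos.2 hdpos)
    refine ⟨fun z => t * mol (v x) (v y) z, ?_, ?_, ?_⟩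
    · rw [← Finset.mul_sum, sum_mol, mul_zero]
    · rw [tcNorm_smul_mol hd 0 (hvinj.ne hxy) ht, htdef, inv_mul_cancel₀ (ne_of_gt hdpos)]
    · rw [core _ (by rw [← Finset.mul_sum, sum_mol, mul_zero])]
      have hexp : ∀ z, (fun k => (fun w => t * mol (v x) (v y) w) (v k)) z
          = ∑ k ∈ Finset.univ.filter (· ≠ (0 : Fin (N+1))),
            (t * ((if Anc T x k then (1:ℝ) else 0) - (if Anc T y k then 1 else 0)))
              * mol k (T.1 k) z := by
        intro z
        dsimp only
        rw [mol_pull hvinj]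
        exact mol_expand T x y z t
      rw [tcNorm_tree hd' T hexp]
      have : ∀ k ∈ Finset.univ.filter (· ≠ (0 : Fin (N+1))),
          |t * ((if Anc T x k then (1:ℝ) else 0) - (if Anc T y k then 1 else 0))|
            * d' k (T.1 k)
          = t * (|((if Anc T x k then (1:ℝ) else 0) - (if Anc T y k then 1 else 0))|
            * d' k (T.1 k)) := by
        intro k _
        rw [abs_mul, abs_of_nonneg ht, mul_assoc]
      rw [Finset.sum_congr rfl this, ← Finset.mul_sum, coef_abs_sum d' T x y,
        div_eq_inv_mul]
  have hd1nonneg : 0 ≤ d1Basis d b bstar := by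
    refine Real.sSup_nonneg ?_
    rintro e ⟨μ, hμ, hnorm, rfl⟩
    refine Finset.sum_nonneg fun n _ => ?_
    exact mul_nonneg (abs_nonneg _) (tcNorm_nonneg (fun a b' => hd.nonneg a b') 0 (b n))
  -- existence of a distinct pair from a normalised element
  have hpair : ∀ μ : Fin (N+1) → ℝ, (∑ x, μ x = 0) → tcNorm d 0 μ = 1 →
      ∃ x y : Fin (N+1), x ≠ y := by
    intro μ hμ hnorm
    by_contra hcon
    push_neg at hcon
    have hall : ∀ z : Fin (N+1), μ z = 0 := by
      intro z
      have hsum : ∑ x, μ x = μ z := by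
        apply Finset.sum_eq_single z
        · intro w _ hwz
          exact absurd (hcon w z) hwz
        · intro h
          exact absurd (Finset.mem_univ z) h
      rw [← hsum, hμ]
    have hzero : tcNorm d 0 μ = 0 := by
      have hset : {c : ℝ | ∃ f : Fin (N+1) → ℝ, f 0 = 0 ∧ (∀ x y, |f x - f y| ≤ d x y) ∧
          c = ∑ x, μ x * f x} = {0} := by
        ext e
        constructor
        · rintro ⟨f, hf0, hLip, rfl⟩
          simp only [Set.mem_singleton_iff]
          rw [Finset.sum_congr rfl (fun z _ => by rw [hall z, zero_mul])]
          exact Finset.sum_const_zero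
        · rintro rfl
          exact ⟨fun _ => 0, rfl, fun a b' => by simpa using hd.nonneg a b', by simp⟩
      rw [tcNorm, hset, csSup_singleton]
    rw [hzero] at hnorm
    norm_num at hnorm
  -- elements of the d1 set are bounded by R
  have hd1le : ∀ e ∈ {c : ℝ | ∃ μ : Fin (N+1) → ℝ, (∑ x, μ x = 0) ∧ tcNorm d 0 μ = 1 ∧
      c = ∑ n ∈ Finset.univ.filter (· ≠ (0 : Fin (N+1))), |bstar n μ| * tcNorm d 0 (b n)},
      e ≤ R := by
    rintro e ⟨μ, hμ, hnorm, rfl⟩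
    obtain ⟨x, y, hxy⟩ := hpair μ hμ hnorm
    have hRpos : 0 < R := lt_of_lt_of_le one_pos (hR1 x y hxy)
    rw [core μ hμ]
    calc tcNorm (treeDist d' T) 0 (fun k => μ (v k))
        ≤ R * tcNorm d' 0 (fun k => μ (v k)) :=
          tcNorm_le_mul (fun a b' => treeDist_nonneg (fun i j => hd'.nonneg i j) T a b')
            hRpos hcomp 0 _
      _ = R := by rw [hpull μ, hnorm, mul_one]
  have hsup : R = d1Basis d b bstar := by
    apply le_antisymm
    · refine Real.sSup_le ?_ hd1nonneg
      rintro r ⟨x, y, hxy, rfl⟩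
      obtain ⟨μ, h1, h2, h3⟩ := hratio_elt x y hxy
      rw [d1Basis]
      exact le_csSup ⟨R, fun e he => hd1le e he⟩ ⟨μ, h1, h2, h3⟩
    · rw [d1Basis]
      exact Real.sSup_le hd1le hRnonneg
  refine ⟨F, hv0, T, hsup, ?_⟩
  intro x y hxy
  constructor
  · exact dist_le_treeDist hd' T x y
  · have h := hcomp x y
    rw [hsup] at h
    exact h

end TCS
namespace TCS

variable {N : ℕ}

/-- Expansion of any mean-zero function in the tree molecule basis, with subtree-sum
coefficients. -/
lemma F1_expand (T : Tr N) (ν : Fin (N+1) → ℝ) (hν : ∑ x, ν x = 0) (w : Fin (N+1)) :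
    ν w = ∑ n ∈ Finset.univ.filter (· ≠ (0 : Fin (N+1))),
      (∑ k, if Anc T k n then ν k else 0) * mol n (T.1 n) w := by
  symm
  calc ∑ n ∈ Finset.univ.filter (· ≠ (0 : Fin (N+1))),
        (∑ k, if Anc T k n then ν k else 0) * mol n (T.1 n) w
      = ∑ n ∈ Finset.univ.filter (· ≠ (0 : Fin (N+1))),
          ∑ k, (if Anc T k n then ν k else 0) * mol n (T.1 n) w := by
        refine Finset.sum_congr rfl fun n _ => ?_
        rw [Finset.sum_mul]
    _ = ∑ k, ∑ n ∈ Finset.univ.filter (· ≠ (0 : Fin (N+1))),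
          (if Anc T k n then ν k else 0) * mol n (T.1 n) w := Finset.sum_comm
    _ = ∑ k, ν k * (indic k w - indic 0 w) := by
        refine Finset.sum_congr rfl fun k _ => ?_
        rw [← tel' (T := T) w k, Finset.mul_sum]
        refine Finset.sum_congr rfl fun n _ => ?_
        split_ifs with h <;> ring
    _ = (∑ k, ν k * indic k w) - ∑ k, ν k * indic 0 w := by
        rw [← Finset.sum_sub_distrib]
        exact Finset.sum_congr rfl fun k _ => by ring
    _ = ν w := by
        have e1 : ∑ k, ν k * indic k w = ν w := by
          simp [indic]
        have e2 : ∑ k, ν k * indic 0 w = 0 := by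
          rw [← Finset.sum_mul, hν, zero_mul]
        rw [e1, e2, sub_zero]

/-- The tree basis determined by `F` and `T` is a free basis. -/
lemma tree_basis_isFreeBasis (F : Equiv.Perm (Fin (N+1))) (T : Tr N) :
    IsFreeBasis N (fun n => mol (F n) (F (T.1 n)))
      (fun n μ => ∑ k, if Anc T k n then μ (F k) else 0) := by
  classical
  have hmolpull' : ∀ a bb z : Fin (N+1), mol (F a) (F bb) z = mol a bb (F.symm z) := by
    intro a bb z
    simp [mol, indic, Equiv.symm_apply_eq]
  refine ⟨?_, ?_, ?_, ?_⟩
  · intro n _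
    exact sum_mol _ _
  · intro μ hμ z
    have hν : ∑ k, μ (F k) = 0 := by rw [Equiv.sum_comp F μ]; exact hμ
    have h := F1_expand T (fun k => μ (F k)) hν (F.symm z)
    dsimp only at h ⊢
    calc μ z = μ (F (F.symm z)) := by rw [Equiv.apply_symm_apply]
      _ = _ := by
          rw [h]
          refine Finset.sum_congr rfl fun n _ => ?_
          rw [hmolpull']
  · intro n m hn hm
    dsimp only
    have hterm : ∀ k : Fin (N+1), (if Anc T k n then mol (F m) (F (T.1 m)) (F k) else 0)
        = (if Anc T k n then indic m k else 0) - (if Anc T k n then indic (T.1 m) k else 0) := by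
      intro k
      rw [mol_pull F.injective]
      by_cases h : Anc T k n
      · simp only [if_pos h]; rfl
      · simp only [if_neg h]; ring
    rw [Finset.sum_congr rfl fun k _ => hterm k, Finset.sum_sub_distrib]
    have e1 : ∀ w : Fin (N+1), ∑ k, (if Anc T k n then indic w k else 0)
        = (if Anc T w n then (1:ℝ) else 0) := by
      intro w
      rw [Finset.sum_eq_single w]
      · by_cases h : Anc T w n
        · simp [h, indic]
        · simp [h]
      · intro k _ hkw
        have : indic w k = 0 := by simp [indic, hkw]
        rw [this]
        split <;> rfl
      · intro h
        exact absurd (Finset.mem_univ w) h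
    rw [e1 m, e1 (T.1 m)]
    by_cases hnm : n = m
    · subst hnm
      rw [if_pos (anc_refl T n), if_pos rfl, if_neg]
      · ring
      · intro h
        exact absurd (lt_of_le_of_lt h.le (T.2.2 n hn)) (lt_irrefl _)
    · rw [if_neg hnm]
      by_cases hmn : Anc T m n
      · rw [if_pos hmn, if_pos ((anc_head hmn (fun h => hnm h.symm)).2)]
        ring
      · have hmn' : ¬ Anc T (T.1 m) n :=
          fun h => hmn (Relation.ReflTransGen.head ⟨rfl, hm⟩ h)
        rw [if_neg hmn, if_neg hmn']
        ring
  · intro n c μ ν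
    dsimp only
    rw [Finset.mul_sum, ← Finset.sum_add_distrib]
    refine Finset.sum_congr rfl fun k _ => ?_
    by_cases h : Anc T k n
    · simp only [if_pos h, Pi.add_apply, Pi.smul_apply, smul_eq_mul]
    · simp only [if_neg h, mul_zero, add_zero]

/-- From a tree with distortion `D` construct a molecule basis of distortion at
most `D`. -/
lemma tree_to_basis {d : Fin (N+1) → Fin (N+1) → ℝ} (hd : IsMetric d)
    (F : Equiv.Perm (Fin (N+1))) (hF0 : F 0 = 0) (T : Tr N) {D : ℝ} (hD : 1 ≤ D)
    (hbound : ∀ x y : Fin (N+1), x ≠ y →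
      treeDist (fun i j => d (F i) (F j)) T x y ≤ D * d (F x) (F y)) :
    ∃ b' : Fin (N+1) → Fin (N+1) → ℝ, ∃ bstar' : Fin (N+1) → (Fin (N+1) → ℝ) → ℝ,
      IsFreeBasis N b' bstar' ∧
      (∀ n : Fin (N+1), n ≠ 0 → ∃ x y : Fin (N+1), x ≠ y ∧ b' n = mol x y) ∧
      d1Basis d b' bstar' ≤ D := by
  classical
  have hd' : IsMetric (fun i j => d (F i) (F j)) := pullback_metric hd F.injective
  have hFne : ∀ n : Fin (N+1), n ≠ 0 → F n ≠ F (T.1 n) :=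
    fun n hn => F.injective.ne (Ne.symm (ne_of_lt (T.2.2 n hn)))
  refine ⟨fun n => mol (F n) (F (T.1 n)), fun n μ => ∑ k, if Anc T k n then μ (F k) else 0,
    tree_basis_isFreeBasis F T, fun n hn => ⟨F n, F (T.1 n), hFne n hn, rfl⟩, ?_⟩
  have hcomp : ∀ x y : Fin (N+1),
      treeDist (fun i j => d (F i) (F j)) T x y ≤ D * d (F x) (F y) := by
    intro x y
    by_cases hxy : x = y
    · subst hxy
      rw [treeDist_self, (hd.2.1 (F x) (F x)).2 rfl, mul_zero]
    · exact hbound x y hxy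
  rw [d1Basis]
  refine Real.sSup_le ?_ (le_trans zero_le_one hD)
  rintro e ⟨μ, hμ, hnorm, rfl⟩
  have hν : ∑ k, μ (F k) = 0 := by rw [Equiv.sum_comp F μ]; exact hμ
  have hexp : ∀ z, (fun k => μ (F k)) z
      = ∑ n ∈ Finset.univ.filter (· ≠ (0 : Fin (N+1))),
        (fun n => ∑ k, if Anc T k n then μ (F k) else 0) n * mol n (T.1 n) z := by
    intro z
    dsimp only
    exact F1_expand T (fun k => μ (F k)) hν z
  have htree := tcNorm_tree hd' T hexp
  have hterm : ∀ n ∈ Finset.univ.filter (· ≠ (0 : Fin (N+1))),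
      |(fun n μ => ∑ k, if Anc T k n then μ (F k) else 0) n μ|
          * tcNorm d 0 ((fun n => mol (F n) (F (T.1 n))) n)
        = |(fun n => ∑ k, if Anc T k n then μ (F k) else 0) n| * d (F n) (F (T.1 n)) := by
    intro n hn
    have hn0 : n ≠ 0 := by simpa using (Finset.mem_filter.1 hn).2
    dsimp only
    rw [tcNorm_mol hd 0 (hFne n hn0)]
  rw [Finset.sum_congr rfl hterm, ← htree]
  calc tcNorm (treeDist (fun i j => d (F i) (F j)) T) 0 (fun k => μ (F k))
      ≤ D * tcNorm (fun i j => d (F i) (F j)) 0 (fun k => μ (F k)) :=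
        tcNorm_le_mul
          (fun a bb => treeDist_nonneg (fun i j => hd'.nonneg i j) T a bb)
          (lt_of_lt_of_le one_pos hD) hcomp 0 _
    _ = D := by
        have hp := tcNorm_pullback d F 0 μ
        rw [hF0] at hp
        rw [hp, hnorm, mul_one]

end TCS




namespace TCS

theorem statement1 (N : ℕ) (d : Fin (N+1) → Fin (N+1) → ℝ) (hd : IsMetric d)
    (b : Fin (N+1) → Fin (N+1) → ℝ) (bstar : Fin (N+1) → (Fin (N+1) → ℝ) → ℝ)
    (hbasis : IsFreeBasis N b bstar)
    (hmol : ∀ n : Fin (N+1), n ≠ 0 → ∃ x y : Fin (N+1), x ≠ y ∧ b n = mol x y) :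
    (∃ F : Equiv.Perm (Fin (N+1)), F 0 = 0 ∧ ∃ T : Tr N,
      sSup {c : ℝ | ∃ x y : Fin (N+1), x ≠ y ∧
          c = treeDist (fun i j => d (F i) (F j)) T x y / d (F x) (F y)}
        = d1Basis d b bstar) ∧
    (∀ D : ℝ, 1 ≤ D →
      ((∃ F : Equiv.Perm (Fin (N+1)), F 0 = 0 ∧ ∃ T : Tr N,
          ∀ x y : Fin (N+1), x ≠ y →
            d (F x) (F y) ≤ treeDist (fun i j => d (F i) (F j)) T x y ∧
            treeDist (fun i j => d (F i) (F j)) T x y ≤ D * d (F x) (F y)) ↔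
        ∃ b' bstar', IsFreeBasis N b' bstar' ∧
          (∀ n : Fin (N+1), n ≠ 0 → ∃ x y : Fin (N+1), x ≠ y ∧ b' n = mol x y) ∧
          d1Basis d b' bstar' ≤ D)) := by
  constructor
  · obtain ⟨F, hF0, T, hsup, _⟩ := main_tree hd hbasis hmol
    exact ⟨F, hF0, T, hsup⟩
  · intro D hD
    constructor
    · rintro ⟨F, hF0, T, hb⟩
      exact tree_to_basis hd F hF0 T hD (fun x y hxy => (hb x y hxy).2)
    · rintro ⟨b', bstar', hbasis', hmol', hd1⟩
      obtain ⟨F, hF0, T, hsup, hbnds⟩ := main_tree hd hbasis' hmol'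
      refine ⟨F, hF0, T, fun x y hxy => ⟨(hbnds x y hxy).1, ?_⟩⟩
      exact le_trans (hbnds x y hxy).2 (mul_le_mul_of_nonneg_right hd1 (hd.nonneg _ _))

end TCS
end
end

section
/- Fix k ∈ ℕ and the normalised stochastic basis (b_n)_{n=1}^N of F(L_k) described below. Then for every n ∈ {1,…,N}, ‖b_n‖ ≤ 4^{k+1−g(n)}. -/
open Finset

noncomputable section
open scoped Classical

namespace TCS

/-- The `ℓ₁`-distortion of a basis of the free space over a finite metric space `V`
with basepoint `x0`, the basis being indexed by the points `n ≠ x0`. -/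
def d1BasisV {V : Type*} [Fintype V] [DecidableEq V] (d : V → V → ℝ) (x0 : V)
    (b : V → V → ℝ) (bstar : V → (V → ℝ) → ℝ) : ℝ :=
  sSup {c : ℝ | ∃ μ : V → ℝ, (∑ x, μ x = 0) ∧ tcNorm d x0 μ = 1 ∧
    c = ∑ n ∈ Finset.univ.filter (· ≠ x0), |bstar n μ| * tcNorm d x0 (b n)}

/-- Vertices of the Laakso graph `L_k` (here `L_0` is a single edge, and `L_{k+1}`
is obtained from `L_k` by replacing each edge, encoded by a word `Fin k → Fin 6`,
by a copy of the six-point gadget with four new vertices). -/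
def LaaV : ℕ → Type
  | 0 => Fin 2
  | (k+1) => LaaV k ⊕ ((Fin k → Fin 6) × Fin 4)

instance LaaVDecEq : (k : ℕ) → DecidableEq (LaaV k)
  | 0 => inferInstanceAs (DecidableEq (Fin 2))
  | (k+1) =>
    letI := LaaVDecEq k
    inferInstanceAs (DecidableEq (LaaV k ⊕ ((Fin k → Fin 6) × Fin 4)))

instance LaaVFintype : (k : ℕ) → Fintype (LaaV k)
  | 0 => inferInstanceAs (Fintype (Fin 2))
  | (k+1) =>
    letI := LaaVFintype k
    inferInstanceAs (Fintype (LaaV k ⊕ ((Fin k → Fin 6) × Fin 4)))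

/-- Endpoints of the edge of `L_k` encoded by the word `w`.  The four new
vertices of a gadget are labelled `0 = b`, `1 = u`, `2 = v`, `3 = c`, and the six
gadget edges are `0 = {a,b}`, `1 = {b,u}`, `2 = {b,v}`, `3 = {u,c}`, `4 = {v,c}`,
`5 = {c,d}`, where `a, d` are the endpoints of the replaced edge. -/
def ep : (k : ℕ) → (Fin k → Fin 6) → LaaV k × LaaV k
  | 0, _ => ((0 : Fin 2), (1 : Fin 2))
  | (k+1), w =>
    let w' : Fin k → Fin 6 := fun i => w i.castSucc
    let p := ep k w'
    match (w (Fin.last k)).val with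
    | 0 => ((Sum.inl p.1 : LaaV (k+1)), Sum.inr (w', (0 : Fin 4)))
    | 1 => (Sum.inr (w', 0), Sum.inr (w', 1))
    | 2 => (Sum.inr (w', 0), Sum.inr (w', 2))
    | 3 => (Sum.inr (w', 1), Sum.inr (w', 3))
    | 4 => (Sum.inr (w', 2), Sum.inr (w', 3))
    | _ => (Sum.inr (w', 3), Sum.inl p.2)

/-- The Laakso graph `L_k`. -/
def laakso (k : ℕ) : SimpleGraph (LaaV k) :=
  SimpleGraph.fromRel (fun a b => ∃ w : Fin k → Fin 6, ep k w = (a, b))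

/-- The generation of a vertex of `L_k`: the first level at which it appears
(all six vertices of `L_1` have generation `1`). -/
def gen : (k : ℕ) → LaaV k → ℕ
  | 0, _ => 1
  | (k+1), x => Sum.elim (fun y => gen k y) (fun _ => k+1) x

/-- The canonical embedding `V(L_j) ⊆ V(L_k)` for `j ≤ k`. -/
def embLe : (j k : ℕ) → j ≤ k → LaaV j → LaaV k
  | j, 0, h, x => (Nat.le_zero.mp h) ▸ x
  | j, (k+1), h, x =>
    if hj : j = k + 1 then hj ▸ x
    else (Sum.inl (embLe j k (Nat.lt_succ_iff.mp (Nat.lt_of_le_of_ne h hj)) x) : LaaV (k+1))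

/-- `b` is the normalised stochastic basis of `F(L_k)` (with basepoint `x0`)
described in the paper: `b_n = δ_n` for generation-one vertices, and
`b_n = δ_n - (d_{g(n)}(n, e(n)⁻) δ_{e(n)⁺} + d_{g(n)}(n, e(n)⁺) δ_{e(n)⁻}) / 4`
for vertices of generation `≥ 2`. -/
def IsLaaksoBasis (k : ℕ) (x0 : LaaV k) (b : LaaV k → LaaV k → ℝ) : Prop :=
  (∀ n : LaaV k, gen k n = 1 → n ≠ x0 → b n = fun z => indic n z - indic x0 z) ∧
  ∀ (j : ℕ) (hj : j + 1 ≤ k) (w : Fin j → Fin 6) (t : Fin 4),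
    b (embLe (j+1) k hj (Sum.inr (w, t))) = fun z =>
      indic (embLe (j+1) k hj (Sum.inr (w, t))) z -
        (((laakso (j+1)).dist (Sum.inr (w, t)) (Sum.inl (ep j w).1) : ℝ) *
            indic (embLe j k (Nat.le_of_succ_le hj) (ep j w).2) z +
          ((laakso (j+1)).dist (Sum.inr (w, t)) (Sum.inl (ep j w).2) : ℝ) *
            indic (embLe j k (Nat.le_of_succ_le hj) (ep j w).1) z) / 4

/-- `bstar` is the family of coordinate functionals of the basis `b` of `F(L_k)`. -/
def IsLaaCoord (k : ℕ) (x0 : LaaV k) (b : LaaV k → LaaV k → ℝ)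
    (bstar : LaaV k → (LaaV k → ℝ) → ℝ) : Prop :=
  ∀ μ : LaaV k → ℝ, (∑ x, μ x = 0) → ∀ z,
    μ z = ∑ n ∈ Finset.univ.filter (· ≠ x0), bstar n μ * b n z

end TCS

namespace TCS
section Aux
open SimpleGraph
set_option linter.unreachableTactic false
set_option linter.unusedTactic false
set_option linter.unusedVariables false


lemma gen_pos : ∀ (k : ℕ) (x : LaaV k), 1 ≤ gen k x
  | 0, _ => le_refl 1
  | (k+1), Sum.inl x => gen_pos k x
  | (k+1), Sum.inr _ => Nat.le_add_left 1 k

lemma embLe_self (k : ℕ) (h : k ≤ k) (x : LaaV k) : embLe k k h x = x := by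
  cases k with
  | zero => simp [embLe]
  | succ k => simp [embLe]

lemma embLe_succ (j k : ℕ) (h : j ≤ k) (hk : j ≤ k+1) (x : LaaV j) :
    embLe j (k+1) hk x = Sum.inl (embLe j k h x) := by
  have hj : j ≠ k + 1 := by omega
  simp [embLe, hj]
  rfl

lemma gen_embLe : ∀ (k j : ℕ) (h : j ≤ k) (x : LaaV j), gen k (embLe j k h x) = gen j x := by
  intro k
  induction k with
  | zero => intro j h x; interval_cases j; simp [embLe, gen]
  | succ k ih =>
    intro j h x
    by_cases hj : j = k + 1
    · subst hj; rw [embLe_self]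
    · rw [embLe_succ j k (by omega) h x]
      show gen k _ = _
      exact ih j (by omega) x

lemma embLe_embLe : ∀ (k j m : ℕ) (h1 : j ≤ m) (h2 : m ≤ k) (x : LaaV j),
    embLe m k h2 (embLe j m h1 x) = embLe j k (h1.trans h2) x := by
  intro k
  induction k with
  | zero =>
    intro j m h1 h2 x
    have hj : j = 0 := by omega
    have hm : m = 0 := by omega
    subst hj; subst hm
    simp [embLe_self]
  | succ k ih =>
    intro j m h1 h2 x
    by_cases hm : m = k + 1
    · subst hm; rw [embLe_self]
    · have h2' : m ≤ k := by omega
      rw [embLe_succ m k h2' h2, embLe_succ j k (h1.trans h2') (h1.trans h2), ih j m h1 h2']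

lemma exists_decomp : ∀ (k : ℕ) (v : LaaV k), 2 ≤ gen k v →
    ∃ (j : ℕ) (hj : j + 1 ≤ k) (w : Fin j → Fin 6) (t : Fin 4),
      v = embLe (j+1) k hj (Sum.inr (w, t)) := by
  intro k
  induction k with
  | zero => intro v hv; simp [gen] at hv
  | succ k ih =>
    intro v hv
    cases v with
    | inl x =>
      have hx : 2 ≤ gen k x := hv
      obtain ⟨j, hj, w, t, rfl⟩ := ih x hx
      exact ⟨j, by omega, w, t, (embLe_succ (j+1) k hj (by omega : j+1 ≤ k+1) _).symm⟩
    | inr p =>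
      exact ⟨k, le_refl _, p.1, p.2, (embLe_self (k+1) (le_refl _) _).symm⟩

lemma exists_emb_one : ∀ (k : ℕ) (hk1 : 1 ≤ k) (v : LaaV k), gen k v = 1 →
    ∃ u : LaaV 1, v = embLe 1 k hk1 u := by
  intro k
  induction k with
  | zero => intro h; omega
  | succ k ih =>
    intro hk1 v hv
    by_cases hk : k = 0
    · subst hk; exact ⟨v, by rw [embLe_self]⟩
    · cases v with
      | inl x =>
        obtain ⟨u, hu⟩ := ih (by omega) x hv
        exact ⟨u, by rw [hu, embLe_succ 1 k (by omega) hk1]⟩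
      | inr p =>
        exfalso; have : gen (k+1) (Sum.inr p) = k+1 := rfl; omega


lemma ep_snoc (k : ℕ) (w : Fin k → Fin 6) (i : Fin 6) :
    ep (k+1) (Fin.snoc w i) =
      (match i.val with
      | 0 => ((Sum.inl (ep k w).1 : LaaV (k+1)), Sum.inr (w, (0 : Fin 4)))
      | 1 => (Sum.inr (w, 0), Sum.inr (w, 1))
      | 2 => (Sum.inr (w, 0), Sum.inr (w, 2))
      | 3 => (Sum.inr (w, 1), Sum.inr (w, 3))
      | 4 => (Sum.inr (w, 2), Sum.inr (w, 3))
      | _ => (Sum.inr (w, 3), Sum.inl (ep k w).2)) := by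
  show (let w' : Fin k → Fin 6 := fun l => (Fin.snoc w i : Fin (k+1) → Fin 6) l.castSucc
    let p := ep k w'
    match ((Fin.snoc w i : Fin (k+1) → Fin 6) (Fin.last k)).val with
    | 0 => ((Sum.inl p.1 : LaaV (k+1)), Sum.inr (w', (0 : Fin 4)))
    | 1 => (Sum.inr (w', 0), Sum.inr (w', 1))
    | 2 => (Sum.inr (w', 0), Sum.inr (w', 2))
    | 3 => (Sum.inr (w', 1), Sum.inr (w', 3))
    | 4 => (Sum.inr (w', 2), Sum.inr (w', 3))
    | _ => (Sum.inr (w', 3), Sum.inl p.2)) = _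
  simp only [Fin.snoc_castSucc, Fin.snoc_last]
  rfl

lemma adj_of_ep {k : ℕ} {a b : LaaV k} (w : Fin k → Fin 6) (h : ep k w = (a, b))
    (hne : a ≠ b) : (laakso k).Adj a b := by
  rw [laakso, SimpleGraph.fromRel_adj]
  exact ⟨hne, Or.inl ⟨w, h⟩⟩

section gadget
variable {k : ℕ} (w : Fin k → Fin 6)

lemma adjAB : (laakso (k+1)).Adj (Sum.inl (ep k w).1) (Sum.inr (w, 0)) :=
  adj_of_ep (Fin.snoc w 0) (by rw [ep_snoc]; rfl) (by intro h; first | (injection h with h; injection h with h1 h2; exact absurd h2 (by decide)) | simp at h)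

lemma adjBU : (laakso (k+1)).Adj (Sum.inr (w, 0)) (Sum.inr (w, 1)) :=
  adj_of_ep (Fin.snoc w 1) (by rw [ep_snoc]; rfl) (by intro h; first | (injection h with h; injection h with h1 h2; exact absurd h2 (by decide)) | simp at h)

lemma adjBV : (laakso (k+1)).Adj (Sum.inr (w, 0)) (Sum.inr (w, 2)) :=
  adj_of_ep (Fin.snoc w 2) (by rw [ep_snoc]; rfl) (by intro h; first | (injection h with h; injection h with h1 h2; exact absurd h2 (by decide)) | simp at h)

lemma adjUC : (laakso (k+1)).Adj (Sum.inr (w, 1)) (Sum.inr (w, 3)) :=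
  adj_of_ep (Fin.snoc w 3) (by rw [ep_snoc]; rfl) (by intro h; first | (injection h with h; injection h with h1 h2; exact absurd h2 (by decide)) | simp at h)

lemma adjVC : (laakso (k+1)).Adj (Sum.inr (w, 2)) (Sum.inr (w, 3)) :=
  adj_of_ep (Fin.snoc w 4) (by rw [ep_snoc]; rfl) (by intro h; first | (injection h with h; injection h with h1 h2; exact absurd h2 (by decide)) | simp at h)

lemma adjCD : (laakso (k+1)).Adj (Sum.inr (w, 3)) (Sum.inl (ep k w).2) :=
  adj_of_ep (Fin.snoc w 5) (by rw [ep_snoc]; rfl) (by intro h; first | (injection h with h; injection h with h1 h2; exact absurd h2 (by decide)) | simp at h)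

def ctN : Fin 4 → ℕ := ![1, 2, 2, 3]
def ctN' : Fin 4 → ℕ := ![3, 2, 2, 1]

/-- walk from gadget vertex to the first endpoint -/
lemma gadget_walk1 (t : Fin 4) :
    ∃ p : (laakso (k+1)).Walk (Sum.inr (w, t)) (Sum.inl (ep k w).1), p.length = ctN t := by
  fin_cases t
  · exact ⟨Walk.cons (adjAB w).symm Walk.nil, rfl⟩
  · exact ⟨Walk.cons (adjBU w).symm (Walk.cons (adjAB w).symm Walk.nil), rfl⟩
  · exact ⟨Walk.cons (adjBV w).symm (Walk.cons (adjAB w).symm Walk.nil), rfl⟩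
  · exact ⟨Walk.cons (adjUC w).symm (Walk.cons (adjBU w).symm
      (Walk.cons (adjAB w).symm Walk.nil)), rfl⟩

lemma gadget_walk2 (t : Fin 4) :
    ∃ p : (laakso (k+1)).Walk (Sum.inr (w, t)) (Sum.inl (ep k w).2), p.length = ctN' t := by
  fin_cases t
  · exact ⟨Walk.cons (adjBU w) (Walk.cons (adjUC w) (Walk.cons (adjCD w) Walk.nil)), rfl⟩
  · exact ⟨Walk.cons (adjUC w) (Walk.cons (adjCD w) Walk.nil), rfl⟩
  · exact ⟨Walk.cons (adjVC w) (Walk.cons (adjCD w) Walk.nil), rfl⟩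
  · exact ⟨Walk.cons (adjCD w) Walk.nil, rfl⟩

lemma gadget_walkAD :
    ∃ p : (laakso (k+1)).Walk (Sum.inl (ep k w).1) (Sum.inl (ep k w).2), p.length = 4 :=
  ⟨Walk.cons (adjAB w) (Walk.cons (adjBU w) (Walk.cons (adjUC w)
    (Walk.cons (adjCD w) Walk.nil))), rfl⟩

end gadget

/-- stretching a walk one level up -/
lemma walk_stretch {k : ℕ} {x y : LaaV k} (p : (laakso k).Walk x y) :
    ∃ q : (laakso (k+1)).Walk (Sum.inl x) (Sum.inl y), q.length = 4 * p.length := by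
  induction p with
  | nil => exact ⟨Walk.nil, rfl⟩
  | @cons a c d h p ih =>
    obtain ⟨q, hq⟩ := ih
    rw [laakso, SimpleGraph.fromRel_adj] at h
    obtain ⟨hne, hw | hw⟩ := h
    · obtain ⟨w, hw⟩ := hw
      obtain ⟨r, hr⟩ := gadget_walkAD w
      have h1 : (ep k w).1 = a := by rw [hw]
      have h2 : (ep k w).2 = c := by rw [hw]
      refine ⟨(r.copy (by rw [h1]) (by rw [h2])).append q, ?_⟩
      simp [Walk.length_append, Walk.length_copy, hr, hq, Walk.length_cons]
      erw [Walk.length_append, Walk.length_copy, hr, hq]; ring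
    · obtain ⟨w, hw⟩ := hw
      obtain ⟨r, hr⟩ := gadget_walkAD w
      have h1 : (ep k w).1 = c := by rw [hw]
      have h2 : (ep k w).2 = a := by rw [hw]
      refine ⟨((r.copy (by rw [h1]) (by rw [h2])).reverse).append q, ?_⟩
      simp [Walk.length_append, Walk.length_copy, Walk.length_reverse, hr, hq, Walk.length_cons]
      erw [Walk.length_append, Walk.length_reverse, Walk.length_copy, hr, hq]; ring

lemma ep_cases (k : ℕ) (w : Fin (k+1) → Fin 6) :
    ∃ (w' : Fin k → Fin 6) (i : Fin 6), w = Fin.snoc w' i :=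
  ⟨Fin.init w, w (Fin.last k), (Fin.snoc_init_self w).symm⟩

def ctZ : Fin 4 → ℤ := ![1, 2, 2, 3]

def phi : (k : ℕ) → LaaV k → ℤ
  | 0, x => x.val
  | (k+1), Sum.inl x => 4 * phi k x
  | (k+1), Sum.inr (w, t) =>
      4 * phi k (ep k w).1 + (phi k (ep k w).2 - phi k (ep k w).1) * ctZ t

lemma phi_ep : ∀ (k : ℕ) (w : Fin k → Fin 6), |phi k (ep k w).2 - phi k (ep k w).1| = 1 := by
  intro k
  induction k with
  | zero => intro w; show |((1:Fin 2).val : ℤ) - ((0:Fin 2).val : ℤ)| = 1; decide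
  | succ k ih =>
    intro w
    obtain ⟨w', i, rfl⟩ := ep_cases k w
    have h := (abs_eq (by norm_num : (0:ℤ) ≤ 1)).mp (ih w')
    rw [ep_snoc, abs_eq (by norm_num : (0:ℤ) ≤ 1)]
    fin_cases i <;> simp [phi, ctZ] <;>
      rcases h with h | h <;> first | (left; linarith) | (right; linarith)



lemma phi_adj {k : ℕ} {x y : LaaV k} (h : (laakso k).Adj x y) : |phi k x - phi k y| = 1 := by
  rw [laakso, SimpleGraph.fromRel_adj] at h
  obtain ⟨-, ⟨w, hw⟩ | ⟨w, hw⟩⟩ := h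
  · rw [abs_sub_comm]
    have := phi_ep k w
    rw [hw] at this; exact this
  · have := phi_ep k w
    rw [hw] at this; exact this

lemma phi_walk {k : ℕ} {x y : LaaV k} (p : (laakso k).Walk x y) :
    |phi k x - phi k y| ≤ (p.length : ℤ) := by
  induction p with
  | nil => simp
  | @cons a c d h p ih =>
    have h1 := phi_adj h
    calc |phi k a - phi k d| ≤ |phi k a - phi k c| + |phi k c - phi k d| := abs_sub_le _ _ _
    _ ≤ 1 + (p.length : ℤ) := by rw [h1]; exact add_le_add_right ih 1
    _ ≤ _ := by simp [Walk.length_cons]; ring_nf; omega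

lemma phi_dist {k : ℕ} {x y : LaaV k} (h : (laakso k).Reachable x y) :
    |phi k x - phi k y| ≤ ((laakso k).dist x y : ℤ) := by
  obtain ⟨p, hp⟩ := h.exists_walk_length_eq_dist
  rw [← hp]; exact phi_walk p




lemma gadget_dist {k : ℕ} (w : Fin k → Fin 6) (t : Fin 4)
    (hw1 : ∃ p : (laakso (k+1)).Walk (Sum.inr (w, t)) (Sum.inl (ep k w).1), p.length = ctN t)
    (hw2 : ∃ p : (laakso (k+1)).Walk (Sum.inr (w, t)) (Sum.inl (ep k w).2), p.length = ctN' t) :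
    (laakso (k+1)).dist (Sum.inr (w, t)) (Sum.inl (ep k w).1) = ctN t ∧
    (laakso (k+1)).dist (Sum.inr (w, t)) (Sum.inl (ep k w).2) = ctN' t := by
  obtain ⟨p1, hp1⟩ := hw1
  obtain ⟨p2, hp2⟩ := hw2
  have hd1 : (laakso (k+1)).dist (Sum.inr (w, t)) (Sum.inl (ep k w).1) ≤ ctN t :=
    hp1 ▸ SimpleGraph.dist_le p1
  have hd2 : (laakso (k+1)).dist (Sum.inr (w, t)) (Sum.inl (ep k w).2) ≤ ctN' t :=
    hp2 ▸ SimpleGraph.dist_le p2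
  have hAD : |phi (k+1) (Sum.inl (ep k w).1) - phi (k+1) (Sum.inl (ep k w).2)| = 4 := by
    show |4 * phi k (ep k w).1 - 4 * phi k (ep k w).2| = 4
    rw [show 4 * phi k (ep k w).1 - 4 * phi k (ep k w).2
        = -(4 * (phi k (ep k w).2 - phi k (ep k w).1)) by ring, abs_neg, abs_mul]
    rw [phi_ep k w]; norm_num
  have hr1 : (laakso (k+1)).Reachable (Sum.inr (w, t)) (Sum.inl (ep k w).1) := ⟨p1⟩
  have hr2 : (laakso (k+1)).Reachable (Sum.inr (w, t)) (Sum.inl (ep k w).2) := ⟨p2⟩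
  have l1 := phi_dist hr1
  have l2 := phi_dist hr2
  have hsum : (4 : ℤ) ≤ ((laakso (k+1)).dist (Sum.inr (w, t)) (Sum.inl (ep k w).1) : ℤ)
      + ((laakso (k+1)).dist (Sum.inr (w, t)) (Sum.inl (ep k w).2) : ℤ) := by
    calc (4:ℤ) = |phi (k+1) (Sum.inl (ep k w).1) - phi (k+1) (Sum.inl (ep k w).2)| := hAD.symm
    _ ≤ |phi (k+1) (Sum.inl (ep k w).1) - phi (k+1) (Sum.inr (w, t))|
        + |phi (k+1) (Sum.inr (w, t)) - phi (k+1) (Sum.inl (ep k w).2)| := abs_sub_le _ _ _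
    _ ≤ _ := by rw [abs_sub_comm]; exact add_le_add l1 l2
  have hct : ctN t + ctN' t = 4 := by fin_cases t <;> decide
  constructor <;> omega


lemma walk_embLe : ∀ (k j : ℕ) (h : j ≤ k) {x y : LaaV j} (p : (laakso j).Walk x y),
    ∃ q : (laakso k).Walk (embLe j k h x) (embLe j k h y), q.length = 4^(k-j) * p.length := by
  intro k
  induction k with
  | zero =>
    intro j h x y p
    have hj : j = 0 := by omega
    subst hj
    exact ⟨p.copy (embLe_self 0 h x).symm (embLe_self 0 h y).symm, by simp⟩
  | succ k ih =>
    intro j h x y p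
    by_cases hj : j = k + 1
    · subst hj
      exact ⟨p.copy (embLe_self (k+1) h x).symm (embLe_self (k+1) h y).symm, by simp⟩
    · have h' : j ≤ k := by omega
      obtain ⟨q, hq⟩ := ih j h' p
      obtain ⟨r, hr⟩ := walk_stretch q
      refine ⟨r.copy (embLe_succ j k h' h x).symm (embLe_succ j k h' h y).symm, ?_⟩
      erw [Walk.length_copy, hr, hq, show k + 1 - j = (k - j) + 1 from by omega, pow_succ]
      ring

abbrev w0 : Fin 0 → Fin 6 := Fin.elim0

lemma walk_L1_to_u : ∀ x : LaaV 1, ∃ p : (laakso 1).Walk x (Sum.inr (w0, 1)), p.length ≤ 2 := by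
  intro x
  rcases x with i | ⟨w, t⟩
  · fin_cases i
    · exact ⟨Walk.cons (adjAB w0) (Walk.cons (adjBU w0) Walk.nil), by decide⟩
    · exact ⟨Walk.cons (adjCD w0).symm (Walk.cons (adjUC w0).symm Walk.nil), by decide⟩
  · have hw : w = w0 := by funext l; exact l.elim0
    subst hw
    fin_cases t
    · exact ⟨Walk.cons (adjBU w0) Walk.nil, by decide⟩
    · exact ⟨Walk.nil, by decide⟩
    · exact ⟨Walk.cons (adjBV w0).symm (Walk.cons (adjBU w0) Walk.nil), by decide⟩
    · exact ⟨Walk.cons (adjUC w0).symm Walk.nil, by decide⟩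

lemma walk_L1 (x y : LaaV 1) : ∃ p : (laakso 1).Walk x y, p.length ≤ 4 := by
  obtain ⟨p, hp⟩ := walk_L1_to_u x
  obtain ⟨q, hq⟩ := walk_L1_to_u y
  exact ⟨p.append q.reverse, by erw [Walk.length_append, Walk.length_reverse]; omega⟩

lemma sum_indic {V : Type*} [Fintype V] [DecidableEq V] (y : V) (f : V → ℝ) :
    ∑ x, indic y x * f x = f y := by
  simp [indic, ite_mul]



lemma sum_formula {V : Type*} [Fintype V] [DecidableEq V] (n D A : V) (c1 c2 : ℝ) (f : V → ℝ) :
    ∑ x, (indic n x - (c1 * indic D x + c2 * indic A x) / 4) * f x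
      = f n - (c1 * f D + c2 * f A) / 4 := by
  have key : ∀ x, (indic n x - (c1 * indic D x + c2 * indic A x) / 4) * f x
      = indic n x * f x - (c1 * (indic D x * f x) + c2 * (indic A x * f x)) / 4 := by
    intro x; ring
  rw [Finset.sum_congr rfl (fun x _ => key x), Finset.sum_sub_distrib, sum_indic,
    ← Finset.sum_div, Finset.sum_add_distrib, ← Finset.mul_sum, ← Finset.mul_sum,
    sum_indic, sum_indic]


end Aux
end TCS


namespace TCS

theorem statement13 (k N : ℕ) (hk : 1 ≤ k)
    (F : Fin (N+1) ≃ LaaV k)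
    (hmono : ∀ i j : Fin (N+1), i ≤ j → gen k (F i) ≤ gen k (F j))
    (b : LaaV k → LaaV k → ℝ) (hb : IsLaaksoBasis k (F 0) b)
    (n : LaaV k) (hn : n ≠ F 0) :
    tcNorm (fun u v => ((laakso k).dist u v : ℝ)) (F 0) (b n)
      ≤ 4 ^ (k + 1 - gen k n) := by
  have hx0gen : gen k (F 0) = 1 := by
    have h3 := hmono 0 (F.symm (embLe 1 k hk (Sum.inl (show LaaV 0 from (0 : Fin 2))))) (Fin.zero_le _)
    erw [Equiv.apply_symm_apply, gen_embLe] at h3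
    simp only [gen, Sum.elim_inl] at h3
    change gen k (F 0) ≤ 1 at h3
    have h2 := gen_pos k (F 0)
    omega
  rcases Nat.lt_or_ge (gen k n) 2 with hg | hg
  · -- generation one
    have hgen1 : gen k n = 1 := by have := gen_pos k n; omega
    obtain ⟨u, hu⟩ := exists_emb_one k hk n hgen1
    obtain ⟨u0, hu0⟩ := exists_emb_one k hk (F 0) hx0gen
    obtain ⟨p, hp⟩ := walk_L1 u u0
    obtain ⟨q, hq⟩ := walk_embLe k 1 hk p
    have hdist : (laakso k).dist n (F 0) ≤ 4 ^ (k-1) * 4 := by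
      rw [hu, hu0]
      calc (laakso k).dist (embLe 1 k hk u) (embLe 1 k hk u0) ≤ q.length :=
            SimpleGraph.dist_le q
      _ = 4 ^ (k-1) * p.length := hq
      _ ≤ 4 ^ (k-1) * 4 := Nat.mul_le_mul_left _ hp
    rw [tcNorm]
    apply Real.sSup_le
    · rintro c ⟨f, hf0, hflip, rfl⟩
      rw [hb.1 n hgen1 hn]
      have hs : ∑ x, (indic n x - indic (F 0) x) * f x = f n - f (F 0) := by
        have key : ∀ x, (indic n x - indic (F 0) x) * f x
            = indic n x * f x - indic (F 0) x * f x := fun x => by ring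
        rw [Finset.sum_congr rfl (fun x _ => key x), Finset.sum_sub_distrib,
          sum_indic, sum_indic]
      rw [hs]
      have hcast : ((laakso k).dist n (F 0) : ℝ) ≤ 4 ^ (k-1) * 4 := by
        calc ((laakso k).dist n (F 0) : ℝ) ≤ ((4 ^ (k-1) * 4 : ℕ) : ℝ) := by
              exact_mod_cast hdist
        _ = 4 ^ (k-1) * 4 := by push_cast; ring
      calc f n - f (F 0) ≤ |f n - f (F 0)| := le_abs_self _
      _ ≤ ((laakso k).dist n (F 0) : ℝ) := hflip n (F 0)
      _ ≤ 4 ^ (k-1) * 4 := hcast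
      _ = 4 ^ (k + 1 - gen k n) := by
          rw [hgen1, show k + 1 - 1 = (k-1) + 1 from by omega, pow_succ]
    · positivity
  · -- higher generation
    obtain ⟨j, hj, w, t, rfl⟩ := exists_decomp k n hg
    set nv := embLe (j+1) k hj (Sum.inr (w, t)) with hnv
    have hgenn : gen k nv = j + 1 := by
      erw [hnv, gen_embLe]; rfl
    obtain ⟨hd1, hd2⟩ := gadget_dist w t (gadget_walk1 w t) (gadget_walk2 w t)
    -- embedded endpoint identities
    have hinl : ∀ y : LaaV j, (Sum.inl y : LaaV (j+1)) = embLe j (j+1) (Nat.le_succ j) y := by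
      intro y; rw [embLe_succ j j le_rfl, embLe_self]
    have hA : embLe (j+1) k hj (Sum.inl (ep j w).1)
        = embLe j k (Nat.le_of_succ_le hj) (ep j w).1 := by
      rw [hinl, embLe_embLe]
    have hD : embLe (j+1) k hj (Sum.inl (ep j w).2)
        = embLe j k (Nat.le_of_succ_le hj) (ep j w).2 := by
      rw [hinl, embLe_embLe]
    -- distance bounds in L_k
    obtain ⟨pa, hpa⟩ := gadget_walk1 w t
    obtain ⟨qa, hqa⟩ := walk_embLe k (j+1) hj pa
    have hdNA : ((laakso k).dist nv (embLe j k (Nat.le_of_succ_le hj) (ep j w).1) : ℝ)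
        ≤ 4 ^ (k - (j+1)) * (ctN t : ℝ) := by
      have h1 : (laakso k).dist nv (embLe (j+1) k hj (Sum.inl (ep j w).1))
          ≤ 4 ^ (k - (j+1)) * ctN t := by
        calc (laakso k).dist nv (embLe (j+1) k hj (Sum.inl (ep j w).1)) ≤ qa.length :=
              SimpleGraph.dist_le qa
        _ = 4 ^ (k - (j+1)) * pa.length := hqa
        _ = 4 ^ (k - (j+1)) * ctN t := by rw [hpa]
      rw [hA] at h1
      calc ((laakso k).dist nv (embLe j k (Nat.le_of_succ_le hj) (ep j w).1) : ℝ)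
          ≤ ((4 ^ (k - (j+1)) * ctN t : ℕ) : ℝ) := by exact_mod_cast h1
      _ = 4 ^ (k - (j+1)) * (ctN t : ℝ) := by push_cast; ring
    obtain ⟨pd, hpd⟩ := gadget_walk2 w t
    obtain ⟨qd, hqd⟩ := walk_embLe k (j+1) hj pd
    have hdND : ((laakso k).dist nv (embLe j k (Nat.le_of_succ_le hj) (ep j w).2) : ℝ)
        ≤ 4 ^ (k - (j+1)) * (ctN' t : ℝ) := by
      have h1 : (laakso k).dist nv (embLe (j+1) k hj (Sum.inl (ep j w).2))
          ≤ 4 ^ (k - (j+1)) * ctN' t := by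
        calc (laakso k).dist nv (embLe (j+1) k hj (Sum.inl (ep j w).2)) ≤ qd.length :=
              SimpleGraph.dist_le qd
        _ = 4 ^ (k - (j+1)) * pd.length := hqd
        _ = 4 ^ (k - (j+1)) * ctN' t := by rw [hpd]
      rw [hD] at h1
      calc ((laakso k).dist nv (embLe j k (Nat.le_of_succ_le hj) (ep j w).2) : ℝ)
          ≤ ((4 ^ (k - (j+1)) * ctN' t : ℕ) : ℝ) := by exact_mod_cast h1
      _ = 4 ^ (k - (j+1)) * (ctN' t : ℝ) := by push_cast; ring
    -- numeric facts about ctN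
    have hab : (ctN t : ℝ) + (ctN' t : ℝ) = 4 ∧ (ctN t : ℝ) * (ctN' t : ℝ) ≤ 4 ∧
        (0:ℝ) ≤ (ctN t : ℝ) ∧ (0:ℝ) ≤ (ctN' t : ℝ) := by
      fin_cases t <;> norm_num [ctN, ctN']
    obtain ⟨hsum4, hprod, ha0, hb0⟩ := hab
    have hc1 : ((laakso (j+1)).dist (Sum.inr (w, t)) (Sum.inl (ep j w).1) : ℝ)
        = (ctN t : ℝ) := by exact_mod_cast congrArg (Nat.cast : ℕ → ℝ) hd1
    have hc2 : ((laakso (j+1)).dist (Sum.inr (w, t)) (Sum.inl (ep j w).2) : ℝ)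
        = (ctN' t : ℝ) := by exact_mod_cast congrArg (Nat.cast : ℕ → ℝ) hd2
    have hb2 := hb.2 j hj w t
    rw [tcNorm]
    apply Real.sSup_le
    · rintro c ⟨f, hf0, hflip, rfl⟩
      rw [← hnv] at hb2
      rw [hb2]
      have hs := sum_formula nv (embLe j k (Nat.le_of_succ_le hj) (ep j w).2)
        (embLe j k (Nat.le_of_succ_le hj) (ep j w).1)
        ((laakso (j+1)).dist (Sum.inr (w, t)) (Sum.inl (ep j w).1) : ℝ)
        ((laakso (j+1)).dist (Sum.inr (w, t)) (Sum.inl (ep j w).2) : ℝ) f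
      beta_reduce
      rw [hs, hc1, hc2]
      set a := (ctN t : ℝ)
      set bb := (ctN' t : ℝ)
      have e1 : f nv - f (embLe j k (Nat.le_of_succ_le hj) (ep j w).2)
          ≤ ((laakso k).dist nv (embLe j k (Nat.le_of_succ_le hj) (ep j w).2) : ℝ) :=
        (le_abs_self _).trans (hflip nv _)
      have e2 : f nv - f (embLe j k (Nat.le_of_succ_le hj) (ep j w).1)
          ≤ ((laakso k).dist nv (embLe j k (Nat.le_of_succ_le hj) (ep j w).1) : ℝ) :=
        (le_abs_self _).trans (hflip nv _)
      have hm0 : (0:ℝ) ≤ 4 ^ (k - (j+1)) := by positivity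
      have hexp : (4:ℝ) ^ (k + 1 - gen k nv) = 4 * 4 ^ (k - (j+1)) := by
        rw [hgenn, show k + 1 - (j+1) = (k - (j+1)) + 1 from by omega, pow_succ]; ring
      calc f nv - (a * f (embLe j k (Nat.le_of_succ_le hj) (ep j w).2) + bb * f (embLe j k (Nat.le_of_succ_le hj) (ep j w).1)) / 4
          = (a * (f nv - f (embLe j k (Nat.le_of_succ_le hj) (ep j w).2)) + bb * (f nv - f (embLe j k (Nat.le_of_succ_le hj) (ep j w).1))) / 4 := by
            linear_combination (-(f nv)/4) * hsum4
      _ ≤ (a * ((laakso k).dist nv (embLe j k (Nat.le_of_succ_le hj) (ep j w).2) : ℝ) + bb * ((laakso k).dist nv (embLe j k (Nat.le_of_succ_le hj) (ep j w).1) : ℝ)) / 4 := by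
            gcongr
      _ ≤ (a * (4 ^ (k - (j+1)) * bb) + bb * (4 ^ (k - (j+1)) * a)) / 4 := by
            gcongr
      _ = 4 ^ (k - (j+1)) * (a * bb) / 2 := by ring
      _ ≤ 4 ^ (k - (j+1)) * 4 / 2 := by gcongr
      _ ≤ 4 * 4 ^ (k - (j+1)) := by linarith
      _ = 4 ^ (k + 1 - gen k nv) := hexp.symm
    · positivity


end TCS
end
end
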